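/- arXiv:1907.00369 — 6 statements merged into one kernel-verified Lean document; each statement's English description precedes it below -/
import Mathlib

section
/- Let A, B be positive definite n×n complex matrices and X a Hermitian positive semidefinite matrix such that the 2n×2n block matrix [[A, X],[X, B]] is positive semidefinite. Then X ≤ A♯B in the Loewner order. -/
open Matrix
open scoped ComplexOrder

/-- Square root of a (Hermitian positive semidefinite) matrix via the
continuous functional calculus. -/
noncomputable def msqrt {n : Type*} [Fintype n] [DecidableEq n]
    (M : Matrix n n ℂ) : Matrix n n ℂ :=
  cfc Real.sqrt M

/-- Real power of a (Hermitian positive semidefinite) matrix via the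
continuous functional calculus. -/
noncomputable def mpow {n : Type*} [Fintype n] [DecidableEq n]
    (M : Matrix n n ℂ) (t : ℝ) : Matrix n n ℂ :=
  cfc (fun x : ℝ => x ^ t) M

/-- Continuous function applied to a Hermitian matrix via functional calculus. -/
noncomputable def mfun {n : Type*} [Fintype n] [DecidableEq n]
    (f : ℝ → ℝ) (M : Matrix n n ℂ) : Matrix n n ℂ :=
  cfc f M

/-- The absolute value `|M| = (Mᴴ M)^{1/2}` of a matrix. -/
noncomputable def matAbs {n : Type*} [Fintype n] [DecidableEq n]
    (M : Matrix n n ℂ) : Matrix n n ℂ :=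
  msqrt (Mᴴ * M)

/-- The absolute value `|Mᴴ| = (M Mᴴ)^{1/2}` of the adjoint of a matrix. -/
noncomputable def matAbsStar {n : Type*} [Fintype n] [DecidableEq n]
    (M : Matrix n n ℂ) : Matrix n n ℂ :=
  msqrt (M * Mᴴ)

/-- Trace norm (sum of singular values) of a matrix. -/
noncomputable def trNorm {n : Type*} [Fintype n] [DecidableEq n]
    (M : Matrix n n ℂ) : ℝ :=
  ((matAbs M).trace).re

/-- Operator norm of a matrix acting on Euclidean space. -/
noncomputable def opNorm {n : Type*} [Fintype n] [DecidableEq n]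
    (M : Matrix n n ℂ) : ℝ :=
  ‖Matrix.toEuclideanCLM (𝕜 := ℂ) M‖

/-- Frobenius (Hilbert-Schmidt) norm of a matrix. -/
noncomputable def frobNorm {n : Type*} [Fintype n] [DecidableEq n]
    (M : Matrix n n ℂ) : ℝ :=
  Real.sqrt ((Mᴴ * M).trace).re

/-- Geometric mean `A♯B = A^{1/2}(A^{-1/2} B A^{-1/2})^{1/2} A^{1/2}`
of (positive definite) matrices. -/
noncomputable def geom {n : Type*} [Fintype n] [DecidableEq n]
    (A B : Matrix n n ℂ) : Matrix n n ℂ :=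
  msqrt A * msqrt ((msqrt A)⁻¹ * B * (msqrt A)⁻¹) * msqrt A

/-- Weighted geometric mean `A♯_θB = A^{1/2}(A^{-1/2} B A^{-1/2})^θ A^{1/2}`. -/
noncomputable def geomW {n : Type*} [Fintype n] [DecidableEq n]
    (A B : Matrix n n ℂ) (θ : ℝ) : Matrix n n ℂ :=
  msqrt A * mpow ((msqrt A)⁻¹ * B * (msqrt A)⁻¹) θ * msqrt A

section Aux

variable {n : Type*} [Fintype n] [DecidableEq n]

noncomputable def Matrix.PosSemidef.sqrt {A : Matrix n n ℂ} (hA : A.PosSemidef) :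
    Matrix n n ℂ :=
  hA.1.cfc Real.sqrt

open scoped MatrixOrder in
lemma Matrix.PosSemidef.sqrt_eq_cfc {A : Matrix n n ℂ} (hA : A.PosSemidef) :
    hA.sqrt = CFC.sqrt A := by
  rw [Matrix.PosSemidef.sqrt, ← hA.1.cfc_eq, CFC.sqrt_eq_real_sqrt A hA.nonneg, cfcₙ_eq_cfc]

open scoped MatrixOrder in
lemma Matrix.PosSemidef.posSemidef_sqrt {A : Matrix n n ℂ} (hA : A.PosSemidef) :
    hA.sqrt.PosSemidef := by
  rw [hA.sqrt_eq_cfc]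
  exact (CFC.sqrt_nonneg A).posSemidef

open scoped MatrixOrder in
lemma Matrix.PosSemidef.sqrt_mul_self {A : Matrix n n ℂ} (hA : A.PosSemidef) :
    hA.sqrt * hA.sqrt = A := by
  rw [hA.sqrt_eq_cfc]
  exact CFC.sqrt_mul_sqrt_self A hA.nonneg

lemma msqrt_eq_sqrt {A : Matrix n n ℂ} (hA : A.PosSemidef) : msqrt A = hA.sqrt := by
  rw [msqrt, hA.1.cfc_eq]
  rfl

lemma conj_posSemidef {A C : Matrix n n ℂ} (hA : A.PosSemidef) (hC : C.IsHermitian) :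
    (C * A * C).PosSemidef := by
  have := hA.mul_mul_conjTranspose_same C
  rwa [hC.eq] at this

/-- If `0 ≤ Y` and `Y² ≤ M`, then `Y ≤ √M`. -/
lemma le_sqrt_of_sq_le {M Y : Matrix n n ℂ} (hM : M.PosSemidef) (hY : Y.PosSemidef)
    (h : (M - Y * Y).PosSemidef) : (hM.sqrt - Y).PosSemidef := by
  set S := hM.sqrt with hSdef
  have hS : S.PosSemidef := hM.posSemidef_sqrt
  have hSS : S * S = M := hM.sqrt_mul_self
  have hD : (S - Y).IsHermitian := hS.1.sub hY.1
  refine hD.posSemidef_iff_eigenvalues_nonneg.mpr fun i => ?_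
  by_contra hneg
  push_neg at hneg
  set μ : ℝ := hD.eigenvalues i with hμdef
  set v : n → ℂ := ⇑(hD.eigenvectorBasis i) with hvdef
  have hv : (S - Y) *ᵥ v = (μ : ℂ) • v := hD.mulVec_eigenvectorBasis i
  have hvne : v ≠ 0 := by
    have := hD.eigenvectorBasis.orthonormal.ne_zero i
    intro hc
    apply this
    ext j
    exact congrFun hc j
  set a : ℂ := star v ⬝ᵥ S *ᵥ v with hadef
  set b : ℂ := star v ⬝ᵥ Y *ᵥ v with hbdef
  have ha : 0 ≤ a := hS.dotProduct_mulVec_nonneg v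
  have hb : 0 ≤ b := hY.dotProduct_mulVec_nonneg v
  -- star v ᵥ* (S - Y) = μ • star v
  have hvm : star v ᵥ* (S - Y) = (μ : ℂ) • star v := by
    have h1 : star ((S - Y) *ᵥ v) = star v ᵥ* (S - Y)ᴴ := star_mulVec _ _
    rw [hD.eq, hv] at h1
    rw [← h1, star_smul]
    simp [Complex.star_def, Complex.conj_ofReal]
  have hsum : star v ⬝ᵥ (M - Y * Y) *ᵥ v = (μ : ℂ) * (a + b) := by
    have hdecomp : M - Y * Y = S * (S - Y) + (S - Y) * Y := by
      rw [← hSS]; noncomm_ring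
    rw [hdecomp, add_mulVec, dotProduct_add]
    have t1 : star v ⬝ᵥ (S * (S - Y)) *ᵥ v = (μ : ℂ) * a := by
      rw [← mulVec_mulVec, hv, mulVec_smul, dotProduct_smul, hadef, smul_eq_mul]
    have t2 : star v ⬝ᵥ ((S - Y) * Y) *ᵥ v = (μ : ℂ) * b := by
      rw [← mulVec_mulVec, dotProduct_mulVec, hvm, smul_dotProduct, smul_eq_mul]
    rw [t1, t2, mul_add]
  have hge : 0 ≤ (μ : ℂ) * (a + b) := hsum ▸ h.dotProduct_mulVec_nonneg v
  -- from μ < 0 we deduce a + b = 0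
  have hab : a + b = 0 := by
    have hab' : 0 ≤ a + b := add_nonneg ha hb
    rw [Complex.nonneg_iff] at hab' hge
    have him : (a + b).im = 0 := hab'.2.symm
    have hre : 0 ≤ (a + b).re := hab'.1
    have : 0 ≤ ((μ : ℂ) * (a + b)).re := hge.1
    rw [Complex.mul_re, Complex.ofReal_re, Complex.ofReal_im, him] at this
    simp only [zero_mul, sub_zero] at this
    have hre0 : (a + b).re = 0 := le_antisymm (nonpos_of_mul_nonneg_right this hneg) hre
    exact Complex.ext hre0 him
  have ha0 : a = 0 :=
    le_antisymm (by calc a ≤ a + b := le_add_of_nonneg_right hb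
                       _ = 0 := hab) ha
  have hb0 : b = 0 := by rwa [ha0, zero_add] at hab
  have hSv : S *ᵥ v = 0 := (hS.dotProduct_mulVec_zero_iff v).mp ha0
  have hYv : Y *ᵥ v = 0 := (hY.dotProduct_mulVec_zero_iff v).mp hb0
  have : (μ : ℂ) • v = 0 := by
    rw [← hv, sub_mulVec, hSv, hYv, sub_zero]
  rcases smul_eq_zero.mp this with hc | hc
  · exact absurd (Complex.ofReal_eq_zero.mp hc) (ne_of_lt hneg)
  · exact hvne hc

end Aux

/-- If `[[A, X],[X, B]] ≥ 0` with `A, B` positive definite and `X` positive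
semidefinite, then `X ≤ A♯B` in the Loewner order. -/
theorem le_geom_of_block_posSemidef {n : Type*} [Fintype n] [DecidableEq n]
    (A B X : Matrix n n ℂ) (hA : A.PosDef) (hB : B.PosDef)
    (hX : X.PosSemidef)
    (hblock : (Matrix.fromBlocks A X X B).PosSemidef) :
    (geom A B - X).PosSemidef := by
  have hApsd : A.PosSemidef := hA.posSemidef
  set S : Matrix n n ℂ := msqrt A with hSdef
  have hSsqrt : S = hApsd.sqrt := msqrt_eq_sqrt hApsd
  have hS : S.PosSemidef := hSsqrt ▸ hApsd.posSemidef_sqrt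
  have hSS : S * S = A := hSsqrt ▸ hApsd.sqrt_mul_self
  -- invertibility
  have hdetA : IsUnit A.det := hA.isUnit.map (detMonoidHom)
  have hdetS : IsUnit S.det := by
    have : S.det * S.det = A.det := by rw [← det_mul, hSS]
    exact isUnit_of_mul_isUnit_left (this ▸ hdetA)
  have hSleft : S * S⁻¹ = 1 := mul_nonsing_inv S hdetS
  have hSright : S⁻¹ * S = 1 := nonsing_inv_mul S hdetS
  have hSinvH : (S⁻¹).IsHermitian := hS.1.inv
  have hSinvSinv : S⁻¹ * S⁻¹ = A⁻¹ := by rw [← hSS, Matrix.mul_inv_rev]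
  -- Schur complement
  haveI : Invertible A := A.invertibleOfIsUnitDet hdetA
  have hschur : (B - X * A⁻¹ * X).PosSemidef := by
    have := (PosDef.fromBlocks₁₁ X B hA).mp (by rwa [hX.1.eq])
    rwa [hX.1.eq] at this
  set M : Matrix n n ℂ := S⁻¹ * B * S⁻¹ with hMdef
  set Y : Matrix n n ℂ := S⁻¹ * X * S⁻¹ with hYdef
  have hM : M.PosSemidef := conj_posSemidef hB.posSemidef hSinvH
  have hY : Y.PosSemidef := conj_posSemidef hX hSinvH
  have hMY : (M - Y * Y).PosSemidef := by
    have hYY : Y * Y = S⁻¹ * (X * A⁻¹ * X) * S⁻¹ := by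
      rw [hYdef, ← hSinvSinv]
      simp only [Matrix.mul_assoc]
    have : M - Y * Y = S⁻¹ * (B - X * A⁻¹ * X) * S⁻¹ := by
      rw [hYY, hMdef, Matrix.mul_sub, Matrix.sub_mul]
    exact this ▸ conj_posSemidef hschur hSinvH
  have hkey : (hM.sqrt - Y).PosSemidef := le_sqrt_of_sq_le hM hY hMY
  -- assemble
  have hXeq : S * Y * S = X := by
    rw [hYdef]
    calc S * (S⁻¹ * X * S⁻¹) * S = (S * S⁻¹) * X * (S⁻¹ * S) := by
          simp only [Matrix.mul_assoc]
      _ = X := by rw [hSleft, hSright, Matrix.one_mul, Matrix.mul_one]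
  have hgeom : geom A B = S * hM.sqrt * S := by
    rw [geom, ← hSdef, ← hMdef, msqrt_eq_sqrt hM]
  have : geom A B - X = S * (hM.sqrt - Y) * S := by
    rw [hgeom, ← hXeq, Matrix.mul_sub, Matrix.sub_mul]
  exact this ▸ conj_posSemidef hkey hS.1
end

section
/- Let A, B be positive definite n×n complex matrices. Then the block matrix [[A, A♯B],[A♯B, B]] is positive semidefinite; consequently A♯B is the maximum, in the Loewner order, of the set of positive semidefinite X with [[A,X],[X,B]] ≥ 0. -/
open Matrix
open scoped ComplexOrder

open scoped MatrixOrder in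
lemma msqrt_eq {n : Type*} [Fintype n] [DecidableEq n]
    {M : Matrix n n ℂ} (hM : M.PosSemidef) : msqrt M = CFC.sqrt M := by
  rw [msqrt, CFC.sqrt_eq_real_sqrt M hM.nonneg, cfcₙ_eq_cfc]

lemma posDef_of_posSemidef_isUnit {n : Type*} [Fintype n] [DecidableEq n]
    {M : Matrix n n ℂ} (hM : M.PosSemidef) (hU : IsUnit M.det) : M.PosDef := by
  refine PosDef.of_dotProduct_mulVec_pos hM.1 fun x hx => ?_
  refine lt_of_le_of_ne (hM.dotProduct_mulVec_nonneg x) fun h => hx ?_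
  have h0 : M *ᵥ x = 0 := (hM.dotProduct_mulVec_zero_iff x).mp h.symm
  have : M⁻¹ *ᵥ (M *ᵥ x) = x := by
    rw [mulVec_mulVec, Matrix.nonsing_inv_mul _ hU, one_mulVec]
  rw [h0, mulVec_zero] at this
  exact this.symm

open scoped MatrixOrder in
lemma msqrt_posDef {n : Type*} [Fintype n] [DecidableEq n]
    {M : Matrix n n ℂ} (hM : M.PosDef) : (msqrt M).PosDef := by
  rw [msqrt_eq hM.posSemidef]
  have hsq := CFC.sqrt_mul_sqrt_self M hM.posSemidef.nonneg
  have hdet : IsUnit (CFC.sqrt M).det := by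
    have h2 : (CFC.sqrt M).det * (CFC.sqrt M).det = M.det := by
      rw [← det_mul, hsq]
    have hMdet : IsUnit M.det := isUnit_iff_ne_zero.mpr (ne_of_gt hM.det_pos)
    exact isUnit_of_mul_isUnit_left (h2 ▸ hMdet)
  exact posDef_of_posSemidef_isUnit (CFC.sqrt_nonneg M).posSemidef hdet

open scoped MatrixOrder in
lemma msqrt_mul_self {n : Type*} [Fintype n] [DecidableEq n]
    {M : Matrix n n ℂ} (hM : M.PosSemidef) : msqrt M * msqrt M = M := by
  rw [msqrt_eq hM]; exact CFC.sqrt_mul_sqrt_self M hM.nonneg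

lemma posDef_conj {n : Type*} [Fintype n] [DecidableEq n]
    {M : Matrix n n ℂ} (hM : M.PosDef) {P : Matrix n n ℂ} (hP : IsUnit P.det) :
    (Pᴴ * M * P).PosDef := by
  refine PosDef.of_dotProduct_mulVec_pos (isHermitian_conjTranspose_mul_mul P hM.1) fun x hx => ?_
  have hPx : P *ᵥ x ≠ 0 := by
    intro h0
    apply hx
    have : P⁻¹ *ᵥ (P *ᵥ x) = x := by
      rw [mulVec_mulVec, Matrix.nonsing_inv_mul _ hP, one_mulVec]
    rw [h0, mulVec_zero] at this
    exact this.symm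
  simpa only [star_mulVec, dotProduct_mulVec, vecMul_vecMul] using hM.dotProduct_mulVec_pos hPx

lemma sub_posSemidef_of_sq_sub_sq {n : Type*} [Fintype n] [DecidableEq n]
    {Y T : Matrix n n ℂ} (hY : Y.PosSemidef) (hT : T.PosDef)
    (h : (T * T - Y * Y).PosSemidef) : (T - Y).PosSemidef := by
  have hM : (T - Y).IsHermitian := hT.1.sub hY.1
  apply hM.posSemidef_iff_eigenvalues_nonneg.mpr
  intro i
  set μ : ℝ := hM.eigenvalues i with hμ
  set v : n → ℂ := ⇑(hM.eigenvectorBasis i) with hv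
  have hvnorm : ‖hM.eigenvectorBasis i‖ = 1 := (hM.eigenvectorBasis).orthonormal.1 i
  have hvne : v ≠ 0 := by
    intro h0
    have : (hM.eigenvectorBasis i) = 0 := by
      ext j; exact congrFun h0 j
    rw [this, norm_zero] at hvnorm; norm_num at hvnorm
  have heig : (T - Y) *ᵥ v = μ • v := hM.mulVec_eigenvectorBasis i
  have hdecomp : T * T - Y * Y = T * (T - Y) + (T - Y) * Y := by noncomm_ring
  have h1 : (0:ℂ) ≤ star v ⬝ᵥ ((T * T - Y * Y) *ᵥ v) := h.dotProduct_mulVec_nonneg v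
  have hsmul : μ • v = (μ:ℂ) • v := by
    ext j; simp [Complex.real_smul]
  have e1 : star v ⬝ᵥ ((T * (T - Y)) *ᵥ v) = (μ:ℂ) * (star v ⬝ᵥ (T *ᵥ v)) := by
    rw [← mulVec_mulVec, heig, hsmul, mulVec_smul, dotProduct_smul, smul_eq_mul]
  have hst : star v ᵥ* (T - Y) = (μ:ℂ) • star v := by
    rw [← hM.eq, ← star_mulVec, heig, hsmul]
    ext j; simp
  have e2 : star v ⬝ᵥ (((T - Y) * Y) *ᵥ v) = (μ:ℂ) * (star v ⬝ᵥ (Y *ᵥ v)) := by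
    rw [← mulVec_mulVec, dotProduct_mulVec, hst, smul_dotProduct, smul_eq_mul]
  have hqT : (0:ℂ) < star v ⬝ᵥ (T *ᵥ v) := hT.dotProduct_mulVec_pos hvne
  have hqY : (0:ℂ) ≤ star v ⬝ᵥ (Y *ᵥ v) := hY.dotProduct_mulVec_nonneg v
  have key : (0:ℂ) ≤ (μ:ℂ) * (star v ⬝ᵥ (T *ᵥ v) + star v ⬝ᵥ (Y *ᵥ v)) := by
    calc (0:ℂ) ≤ star v ⬝ᵥ ((T * T - Y * Y) *ᵥ v) := h1
    _ = (μ:ℂ) * (star v ⬝ᵥ (T *ᵥ v) + star v ⬝ᵥ (Y *ᵥ v)) := by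
        rw [hdecomp, add_mulVec, dotProduct_add, e1, e2, mul_add]
  set q : ℂ := star v ⬝ᵥ (T *ᵥ v) + star v ⬝ᵥ (Y *ᵥ v) with hq
  have hqpos : 0 < q := add_pos_of_pos_of_nonneg hqT hqY
  rw [Complex.lt_def] at hqpos
  rw [Complex.le_def] at key
  simp only [Complex.zero_re, Complex.zero_im, Complex.mul_re, Complex.mul_im,
    Complex.ofReal_re, Complex.ofReal_im] at key hqpos
  obtain ⟨hre, him⟩ := key
  rw [Pi.zero_apply]
  nlinarith [hqpos.1, hre, hqpos.2]

/-- The block matrix `[[A, A♯B],[A♯B, B]]` is positive semidefinite, and `A♯B`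
is the maximum of all positive semidefinite `X` with `[[A,X],[X,B]] ≥ 0`. -/
theorem geom_block_posSemidef_and_max {n : Type*} [Fintype n] [DecidableEq n]
    (A B : Matrix n n ℂ) (hA : A.PosDef) (hB : B.PosDef) :
    (Matrix.fromBlocks A (geom A B) (geom A B) B).PosSemidef ∧
      ∀ X : Matrix n n ℂ, X.PosSemidef →
        (Matrix.fromBlocks A X X B).PosSemidef → (geom A B - X).PosSemidef := by
  set S : Matrix n n ℂ := msqrt A with hSdef
  have hS_pd : S.PosDef := msqrt_posDef hA
  have hS_herm : Sᴴ = S := hS_pd.1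
  have hSS : S * S = A := msqrt_mul_self hA.posSemidef
  have hSdet : IsUnit S.det := isUnit_iff_ne_zero.mpr (ne_of_gt hS_pd.det_pos)
  have hSinvS : S⁻¹ * S = 1 := Matrix.nonsing_inv_mul _ hSdet
  have hSSinv : S * S⁻¹ = 1 := Matrix.mul_nonsing_inv _ hSdet
  have hSinv_herm : (S⁻¹)ᴴ = S⁻¹ := by
    rw [Matrix.conjTranspose_nonsing_inv, hS_herm]
  set C : Matrix n n ℂ := S⁻¹ * B * S⁻¹ with hCdef
  have hSinvdet : IsUnit (S⁻¹).det := S.isUnit_nonsing_inv_det hSdet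
  have hC_pd : C.PosDef := by
    have := posDef_conj hB hSinvdet
    rwa [hSinv_herm] at this
  set T : Matrix n n ℂ := msqrt C with hTdef
  have hT_pd : T.PosDef := msqrt_posDef hC_pd
  have hT_herm : Tᴴ = T := hT_pd.1
  have hTT : T * T = C := msqrt_mul_self hC_pd.posSemidef
  have hgeom : geom A B = S * T * S := rfl
  have hB' : S * (T * T) * S = B := by
    rw [hTT, hCdef]
    calc S * (S⁻¹ * B * S⁻¹) * S = (S * S⁻¹) * B * (S⁻¹ * S) := by
          simp only [Matrix.mul_assoc]
    _ = B := by rw [hSSinv, hSinvS, one_mul, mul_one]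
  constructor
  · have hblock : fromBlocks A (geom A B) (geom A B) B
        = (fromBlocks S (T * S) 0 0)ᴴ * (fromBlocks S (T * S) 0 0) := by
      rw [fromBlocks_conjTranspose, fromBlocks_multiply, fromBlocks_inj]
      refine ⟨?_, ?_, ?_, ?_⟩
      · simp [hS_herm, hSS]
      · simp [hS_herm, hgeom, Matrix.mul_assoc]
      · simp [conjTranspose_mul, hS_herm, hT_herm, hgeom, Matrix.mul_assoc]
      · simp only [conjTranspose_mul, hS_herm, hT_herm, conjTranspose_zero,
          Matrix.zero_mul, add_zero, ← hB', Matrix.mul_assoc]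
    rw [hblock]
    exact posSemidef_conjTranspose_mul_self _
  · intro X hX hbl
    have hXh : Xᴴ = X := hX.1
    have hAdet : IsUnit A.det := isUnit_iff_ne_zero.mpr (ne_of_gt hA.det_pos)
    have : Invertible A := A.invertibleOfIsUnitDet hAdet
    have hbl' : (fromBlocks A X Xᴴ B).PosSemidef := by rw [hXh]; exact hbl
    have hschur : (B - Xᴴ * A⁻¹ * X).PosSemidef :=
      (PosDef.fromBlocks₁₁ X B hA).mp hbl'
    set Y : Matrix n n ℂ := S⁻¹ * X * S⁻¹ with hYdef
    have hY_psd : Y.PosSemidef := by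
      have := hX.mul_mul_conjTranspose_same S⁻¹
      rwa [hSinv_herm] at this
    have hAinv : A⁻¹ = S⁻¹ * S⁻¹ := by
      rw [← hSS, Matrix.mul_inv_rev]
    have hsq : T * T - Y * Y = S⁻¹ * (B - Xᴴ * A⁻¹ * X) * S⁻¹ := by
      rw [hTT, hCdef, hYdef, hXh, hAinv]
      simp only [Matrix.mul_sub, Matrix.sub_mul, Matrix.mul_assoc]
    have hsub : (T * T - Y * Y).PosSemidef := by
      have h2 := hschur.mul_mul_conjTranspose_same S⁻¹
      rw [hSinv_herm] at h2
      rwa [hsq]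
    have hTY : (T - Y).PosSemidef := sub_posSemidef_of_sq_sub_sq hY_psd hT_pd hsub
    have hfinal : geom A B - X = S * (T - Y) * Sᴴ := by
      rw [hS_herm, hgeom, hYdef]
      calc S * T * S - X = S * T * S - (S * S⁻¹) * X * (S⁻¹ * S) := by
            rw [hSSinv, hSinvS, one_mul, mul_one]
      _ = S * (T - S⁻¹ * X * S⁻¹) * S := by
            simp only [Matrix.mul_sub, Matrix.sub_mul, Matrix.mul_assoc]
    rw [hfinal]
    exact hTY.mul_mul_conjTranspose_same S
end

section
/- Let A, B, X be n×n complex matrices with [[A, X],[X*, B]] positive semidefinite, and let p, q > 0 with 1/p + 1/q = 1. Then the operator norm satisfies ‖X‖ ≤ ‖A‖^{1/2} · ‖B‖^{1/2}, and more generally ‖X‖ ≤ ‖A^{p/2}‖^{1/p} · ‖B^{q/2}‖^{1/q}. -/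
open Matrix
open scoped ComplexOrder

private lemma quad_expand' {n : Type*} [Fintype n] [DecidableEq n]
    {A B X : Matrix n n ℂ}
    (hblock : (Matrix.fromBlocks A X Xᴴ B).PosSemidef) (u v : n → ℂ) :
    0 ≤ star u ⬝ᵥ (A *ᵥ u) + star u ⬝ᵥ (X *ᵥ v) + star v ⬝ᵥ (Xᴴ *ᵥ u) + star v ⬝ᵥ (B *ᵥ v) := by
  have h := hblock.dotProduct_mulVec_nonneg (Sum.elim u v)
  have hstar : star (Sum.elim u v) = Sum.elim (star u) (star v) := by
    funext i; cases i <;> rfl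
  rw [hstar, fromBlocks_mulVec, sumElim_dotProduct_sumElim, dotProduct_add, dotProduct_add] at h
  simpa [Sum.elim_comp_inl, Sum.elim_comp_inr, add_assoc] using h

private lemma quad_scaled' {n : Type*} [Fintype n] [DecidableEq n]
    {A B X : Matrix n n ℂ}
    (hblock : (Matrix.fromBlocks A X Xᴴ B).PosSemidef) (u v : n → ℂ) (c d : ℂ) :
    0 ≤ (star c * c) * (star u ⬝ᵥ (A *ᵥ u)) + (star c * d) * (star u ⬝ᵥ (X *ᵥ v))
      + (star d * c) * (star v ⬝ᵥ (Xᴴ *ᵥ u)) + (star d * d) * (star v ⬝ᵥ (B *ᵥ v)) := by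
  have h := quad_expand' hblock (c • u) (d • v)
  simpa only [star_smul, smul_dotProduct, dotProduct_smul, mulVec_smul, smul_eq_mul, mul_assoc,
    mul_left_comm] using h

private lemma mixedCS' {n : Type*} [Fintype n] [DecidableEq n]
    {A B X : Matrix n n ℂ}
    (hblock : (Matrix.fromBlocks A X Xᴴ B).PosSemidef) (u v : n → ℂ) :
    ‖star u ⬝ᵥ (X *ᵥ v)‖ ^ 2 ≤ (star u ⬝ᵥ (A *ᵥ u)).re * (star v ⬝ᵥ (B *ᵥ v)).re := by
  set x := star u ⬝ᵥ (X *ᵥ v) with hxdef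
  set qA := star u ⬝ᵥ (A *ᵥ u) with hqAdef
  set qB := star v ⬝ᵥ (B *ᵥ v) with hqBdef
  set a := qA.re with hadef
  set b := qB.re with hbdef
  have ha0 : 0 ≤ a := by
    have := quad_expand' hblock u 0
    simp only [mulVec_zero, dotProduct_zero, star_zero, zero_dotProduct, add_zero] at this
    exact (Complex.le_def.mp this).1
  have hb0 : 0 ≤ b := by
    have := quad_expand' hblock 0 v
    simp only [mulVec_zero, dotProduct_zero, star_zero, zero_dotProduct, add_zero, zero_add] at this
    exact (Complex.le_def.mp this).1
  have hconj : star v ⬝ᵥ (Xᴴ *ᵥ u) = star x := by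
    rw [hxdef, star_dotProduct, star_mulVec, conjTranspose_conjTranspose, ← dotProduct_mulVec]
  have hxx : x * star x = (‖x‖ : ℂ) ^ 2 := by
    rw [Complex.star_def, Complex.mul_conj]
    norm_cast
    rw [Complex.normSq_eq_norm_sq]
  have key : ∀ t : ℝ, 0 ≤ a * (t * t) + (-(2 * ‖x‖ ^ 2)) * t + ‖x‖ ^ 2 * b := by
    intro t
    have h := quad_scaled' hblock u v (t : ℂ) (-star x)
    rw [hconj] at h
    have hst : star (t : ℂ) = (t : ℂ) := Complex.conj_ofReal t
    have heq : (star (t:ℂ) * (t:ℂ)) * qA + (star (t:ℂ) * (-star x)) * x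
        + (star (-star x) * (t:ℂ)) * star x + (star (-star x) * (-star x)) * qB
        = ((t * t : ℝ) : ℂ) * qA - ((2 * ‖x‖ ^ 2 * t : ℝ) : ℂ) + ((‖x‖ ^ 2 : ℝ) : ℂ) * qB := by
      rw [star_neg, star_star, hst]
      push_cast
      linear_combination (qB - 2 * (t : ℂ)) * hxx
    rw [heq] at h
    have hre := (Complex.le_def.mp h).1
    simp only [Complex.add_re, Complex.sub_re, Complex.re_ofReal_mul, Complex.ofReal_re,
      Complex.zero_re] at hre
    linarith
  have hdisc := discrim_le_zero key
  rw [discrim] at hdisc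
  rcases eq_or_lt_of_le (norm_nonneg x) with h0 | h0
  · rw [← h0]
    simpa using mul_nonneg ha0 hb0
  · nlinarith [mul_pos h0 h0]

private lemma opNorm_le_of_block' {n : Type*} [Fintype n] [DecidableEq n]
    {A B X : Matrix n n ℂ}
    (hblock : (Matrix.fromBlocks A X Xᴴ B).PosSemidef) :
    opNorm X ≤ opNorm A ^ ((1 : ℝ) / 2) * opNorm B ^ ((1 : ℝ) / 2) := by
  have hA0 : 0 ≤ opNorm A := norm_nonneg _
  have hB0 : 0 ≤ opNorm B := norm_nonneg _
  rw [show opNorm X = ‖Matrix.toEuclideanCLM (𝕜 := ℂ) X‖ from rfl]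
  apply ContinuousLinearMap.opNorm_le_bound _ (by positivity)
  intro v
  set T := Matrix.toEuclideanCLM (𝕜 := ℂ) X with hT
  set TA := Matrix.toEuclideanCLM (𝕜 := ℂ) A with hTA
  set TB := Matrix.toEuclideanCLM (𝕜 := ℂ) B with hTB
  set u : EuclideanSpace ℂ n := T v with hu
  have h1 : (inner ℂ u (T v) : ℂ)
      = star (WithLp.equiv 2 (n → ℂ) u) ⬝ᵥ (X *ᵥ (WithLp.equiv 2 (n → ℂ) v)) := by
    exact (EuclideanSpace.inner_eq_star_dotProduct _ _).trans (dotProduct_comm _ _)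
  have h2 : (inner ℂ u (T v) : ℂ) = (‖u‖ : ℂ) ^ 2 := by
    rw [← hu]; exact inner_self_eq_norm_sq_to_K u
  have hnorm2 : ‖(inner ℂ u (T v) : ℂ)‖ = ‖u‖ ^ 2 := by
    rw [h2]; norm_cast; simp [abs_of_nonneg (norm_nonneg u)]
  have hqa : (star (WithLp.equiv 2 (n → ℂ) u) ⬝ᵥ (A *ᵥ (WithLp.equiv 2 (n → ℂ) u))).re
      ≤ opNorm A * ‖u‖ ^ 2 := by
    have e : (inner ℂ u (TA u) : ℂ)
        = star (WithLp.equiv 2 (n → ℂ) u) ⬝ᵥ (A *ᵥ (WithLp.equiv 2 (n → ℂ) u)) := by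
      exact (EuclideanSpace.inner_eq_star_dotProduct _ _).trans (dotProduct_comm _ _)
    rw [← e]
    calc (inner ℂ u (TA u) : ℂ).re ≤ ‖(inner ℂ u (TA u) : ℂ)‖ := Complex.re_le_norm _
      _ ≤ ‖u‖ * ‖TA u‖ := norm_inner_le_norm u (TA u)
      _ ≤ ‖u‖ * (opNorm A * ‖u‖) := by
          have := TA.le_opNorm u
          exact mul_le_mul_of_nonneg_left this (norm_nonneg u)
      _ = opNorm A * ‖u‖ ^ 2 := by ring
  have hqb : (star (WithLp.equiv 2 (n → ℂ) v) ⬝ᵥ (B *ᵥ (WithLp.equiv 2 (n → ℂ) v))).re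
      ≤ opNorm B * ‖v‖ ^ 2 := by
    have e : (inner ℂ v (TB v) : ℂ)
        = star (WithLp.equiv 2 (n → ℂ) v) ⬝ᵥ (B *ᵥ (WithLp.equiv 2 (n → ℂ) v)) := by
      exact (EuclideanSpace.inner_eq_star_dotProduct _ _).trans (dotProduct_comm _ _)
    rw [← e]
    calc (inner ℂ v (TB v) : ℂ).re ≤ ‖(inner ℂ v (TB v) : ℂ)‖ := Complex.re_le_norm _
      _ ≤ ‖v‖ * ‖TB v‖ := norm_inner_le_norm v (TB v)
      _ ≤ ‖v‖ * (opNorm B * ‖v‖) := by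
          have := TB.le_opNorm v
          exact mul_le_mul_of_nonneg_left this (norm_nonneg v)
      _ = opNorm B * ‖v‖ ^ 2 := by ring
  have hqb0 : 0 ≤ (star (WithLp.equiv 2 (n → ℂ) v) ⬝ᵥ (B *ᵥ (WithLp.equiv 2 (n → ℂ) v))).re := by
    have := quad_expand' hblock 0 (WithLp.equiv 2 (n → ℂ) v)
    simp only [mulVec_zero, dotProduct_zero, star_zero, zero_dotProduct, add_zero, zero_add] at this
    exact (Complex.le_def.mp this).1
  have hmix := mixedCS' hblock (WithLp.equiv 2 (n → ℂ) u) (WithLp.equiv 2 (n → ℂ) v)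
  rw [← h1, hnorm2] at hmix
  have hkey : ‖u‖ ^ 2 * ‖u‖ ^ 2 ≤ (opNorm A * opNorm B) * (‖u‖ ^ 2 * ‖v‖ ^ 2) := by
    calc ‖u‖ ^ 2 * ‖u‖ ^ 2 = (‖u‖ ^ 2) ^ 2 := by ring
      _ ≤ _ := hmix
      _ ≤ (opNorm A * ‖u‖ ^ 2) * (opNorm B * ‖v‖ ^ 2) :=
          mul_le_mul hqa hqb hqb0 (by positivity)
      _ = (opNorm A * opNorm B) * (‖u‖ ^ 2 * ‖v‖ ^ 2) := by ring
  have hTv : ‖T v‖ = ‖u‖ := by rw [hu]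
  rw [hTv]
  rcases eq_or_lt_of_le (norm_nonneg u) with h0 | h0
  · rw [← h0]
    exact mul_nonneg (mul_nonneg (Real.rpow_nonneg hA0 _) (Real.rpow_nonneg hB0 _)) (norm_nonneg v)
  · have h3 : ‖u‖ ^ 2 ≤ (opNorm A * opNorm B) * ‖v‖ ^ 2 := by
      nlinarith [hkey, pow_pos h0 2]
    have hs : (opNorm A ^ ((1:ℝ)/2) * opNorm B ^ ((1:ℝ)/2) * ‖v‖) ^ 2
        = (opNorm A * opNorm B) * ‖v‖ ^ 2 := by
      rw [mul_pow, mul_pow, ← Real.rpow_natCast (opNorm A ^ ((1:ℝ)/2)) 2,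
        ← Real.rpow_natCast (opNorm B ^ ((1:ℝ)/2)) 2, ← Real.rpow_mul hA0, ← Real.rpow_mul hB0]
      norm_num
    have h4 : ‖u‖ ^ 2 ≤ (opNorm A ^ ((1:ℝ)/2) * opNorm B ^ ((1:ℝ)/2) * ‖v‖) ^ 2 := by
      rw [hs]; exact h3
    exact (pow_le_pow_iff_left₀ (norm_nonneg u) (mul_nonneg (mul_nonneg (Real.rpow_nonneg hA0 _)
      (Real.rpow_nonneg hB0 _)) (norm_nonneg v)) (by norm_num)).mp h4

open scoped Matrix.Norms.L2Operator in
noncomputable instance matrixL2CStarAlgebra' {n : Type*} [Fintype n] [DecidableEq n] :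
    CStarAlgebra (Matrix n n ℂ) := ⟨⟩

open scoped Matrix.Norms.L2Operator in
private lemma opNorm_rpow_lower' {n : Type*} [Fintype n] [DecidableEq n] {A : Matrix n n ℂ}
    (hA : A.PosSemidef) {t : ℝ} (ht : 0 < t) :
    opNorm A ^ t ≤ opNorm (mpow A t) := by
  have hsa : IsSelfAdjoint A := hA.1
  have hspec : ∀ x ∈ spectrum ℝ A, 0 ≤ x := by
    intro x hx
    rw [Matrix.IsHermitian.spectrum_real_eq_range_eigenvalues hA.1] at hx
    obtain ⟨i, rfl⟩ := hx
    exact hA.eigenvalues_nonneg i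
  have hcont : ContinuousOn (fun x : ℝ => x ^ t) (spectrum ℝ A) :=
    (Real.continuous_rpow_const ht.le).continuousOn
  have hnn : (0:ℝ) ≤ ‖mpow A t‖ := norm_nonneg _
  have hbound : ∀ x ∈ spectrum ℝ A, x ≤ ‖mpow A t‖ ^ t⁻¹ := by
    intro x hx
    have h1 : ‖(fun y : ℝ => y ^ t) x‖ ≤ ‖cfc (fun y : ℝ => y ^ t) A‖ :=
      norm_apply_le_norm_cfc (fun y : ℝ => y ^ t) A hx (hf := hcont) (ha := hsa)
    rw [Real.norm_eq_abs, abs_of_nonneg (Real.rpow_nonneg (hspec x hx) t)] at h1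
    calc x = (x ^ t) ^ t⁻¹ := (Real.rpow_rpow_inv (hspec x hx) ht.ne').symm
      _ ≤ ‖mpow A t‖ ^ t⁻¹ :=
          Real.rpow_le_rpow (Real.rpow_nonneg (hspec x hx) t) h1 (inv_nonneg.mpr ht.le)
  have hA_le : ‖A‖ ≤ ‖mpow A t‖ ^ t⁻¹ := by
    conv_lhs => rw [← cfc_id ℝ A hsa]
    refine norm_cfc_le (Real.rpow_nonneg hnn _) fun x hx => ?_
    rw [Real.norm_eq_abs, id_eq, abs_of_nonneg (hspec x hx)]
    exact hbound x hx
  have h2 : ‖A‖ ^ t ≤ (‖mpow A t‖ ^ t⁻¹) ^ t :=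
    Real.rpow_le_rpow (norm_nonneg _) hA_le ht.le
  rw [Real.rpow_inv_rpow hnn ht.ne'] at h2
  exact h2

private lemma posSemidef_left' {n : Type*} [Fintype n] [DecidableEq n]
    {A B X : Matrix n n ℂ}
    (hblock : (Matrix.fromBlocks A X Xᴴ B).PosSemidef) : A.PosSemidef := by
  refine .of_dotProduct_mulVec_nonneg (isHermitian_fromBlocks_iff.mp hblock.1).1 fun u => ?_
  have := quad_expand' hblock u 0
  simpa using this

private lemma posSemidef_right' {n : Type*} [Fintype n] [DecidableEq n]
    {A B X : Matrix n n ℂ}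
    (hblock : (Matrix.fromBlocks A X Xᴴ B).PosSemidef) : B.PosSemidef := by
  refine .of_dotProduct_mulVec_nonneg (isHermitian_fromBlocks_iff.mp hblock.1).2.2.2 fun u => ?_
  have := quad_expand' hblock 0 u
  simpa using this


/-- Operator norm Hölder inequality for a positive semidefinite block matrix. -/
theorem opNorm_holder_of_block_posSemidef {n : Type*} [Fintype n] [DecidableEq n]
    (A B X : Matrix n n ℂ)
    (hblock : (Matrix.fromBlocks A X Xᴴ B).PosSemidef)
    (p q : ℝ) (hp : 0 < p) (hq : 0 < q) (hpq : 1 / p + 1 / q = 1) :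
    opNorm X ≤ opNorm A ^ ((1 : ℝ) / 2) * opNorm B ^ ((1 : ℝ) / 2) ∧
      opNorm X ≤ opNorm (mpow A (p / 2)) ^ (1 / p) * opNorm (mpow B (q / 2)) ^ (1 / q) := by
  have hA0 : 0 ≤ opNorm A := norm_nonneg _
  have hB0 : 0 ≤ opNorm B := norm_nonneg _
  have part1 := opNorm_le_of_block' hblock
  refine ⟨part1, ?_⟩
  have hp2 : (0:ℝ) < p / 2 := by linarith
  have hq2 : (0:ℝ) < q / 2 := by linarith
  have hAr := opNorm_rpow_lower' (posSemidef_left' hblock) hp2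
  have hBr := opNorm_rpow_lower' (posSemidef_right' hblock) hq2
  have hAle : opNorm A ^ ((1:ℝ)/2) ≤ opNorm (mpow A (p/2)) ^ (1/p) := by
    have := Real.rpow_le_rpow (Real.rpow_nonneg hA0 _) hAr (by positivity : (0:ℝ) ≤ 1/p)
    rw [← Real.rpow_mul hA0] at this
    rw [show p / 2 * (1/p) = (1:ℝ)/2 by field_simp] at this
    exact this
  have hBle : opNorm B ^ ((1:ℝ)/2) ≤ opNorm (mpow B (q/2)) ^ (1/q) := by
    have := Real.rpow_le_rpow (Real.rpow_nonneg hB0 _) hBr (by positivity : (0:ℝ) ≤ 1/q)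
    rw [← Real.rpow_mul hB0] at this
    rw [show q / 2 * (1/q) = (1:ℝ)/2 by field_simp] at this
    exact this
  calc opNorm X ≤ opNorm A ^ ((1:ℝ)/2) * opNorm B ^ ((1:ℝ)/2) := part1
    _ ≤ opNorm (mpow A (p/2)) ^ (1/p) * opNorm (mpow B (q/2)) ^ (1/q) :=
        mul_le_mul hAle hBle (Real.rpow_nonneg hB0 _) (Real.rpow_nonneg (norm_nonneg _) _)
end

section
/- Jensen-type inequality for the trace norm: let φ : [0,∞) → [0,∞) be convex with φ(0) = 0, let A₁,…,A_m be positive semidefinite n×n complex matrices, and let γ₁,…,γ_m ≥ 0 with Σₖ γₖ = 1. Then ‖ φ(Σₖ γₖ Aₖ) ‖₁ ≤ ‖ Σₖ γₖ φ(Aₖ) ‖₁. -/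
open Matrix
open scoped ComplexOrder

set_option linter.unusedSectionVars false

section AuxJensen
variable {n : Type*} [Fintype n] [DecidableEq n]

lemma psd_smul' {c : ℝ} (hc : 0 ≤ c) {A : Matrix n n ℂ} (hA : A.PosSemidef) :
    ((c : ℂ) • A).PosSemidef := by
  refine Matrix.PosSemidef.of_dotProduct_mulVec_nonneg ?_ fun x => ?_
  · unfold Matrix.IsHermitian
    rw [conjTranspose_smul, hA.1, Complex.star_def, Complex.conj_ofReal]
  · rw [smul_mulVec, dotProduct_smul]
    exact smul_nonneg (by exact_mod_cast hc) (hA.dotProduct_mulVec_nonneg x)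

lemma psd_sum' {m : ℕ} (A : Fin m → Matrix n n ℂ) (hA : ∀ k, (A k).PosSemidef)
    (γ : Fin m → ℝ) (hγ : ∀ k, 0 ≤ γ k) : (∑ k, (γ k : ℂ) • A k).PosSemidef := by
  exact Finset.sum_induction _ Matrix.PosSemidef (fun a b ha hb => ha.add hb)
    Matrix.PosSemidef.zero (fun k _ => psd_smul' (hγ k) (hA k))

lemma trace_cfc'' {A : Matrix n n ℂ} (hA : A.IsHermitian) (f : ℝ → ℝ) :
    (hA.cfc f).trace = ∑ i, (f (hA.eigenvalues i) : ℂ) := by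
  have h1 : star (hA.eigenvectorUnitary : Matrix n n ℂ) * hA.eigenvectorUnitary = 1 :=
    Unitary.coe_star_mul_self _
  rw [Matrix.IsHermitian.cfc, Unitary.conjStarAlgAut_apply, Matrix.trace_mul_cycle, h1, one_mul, trace_diagonal]
  simp

lemma posSemidef_cfc' {A : Matrix n n ℂ} (hA : A.IsHermitian) (f : ℝ → ℝ)
    (hf : ∀ i, 0 ≤ f (hA.eigenvalues i)) : (hA.cfc f).PosSemidef := by
  rw [Matrix.IsHermitian.cfc, Unitary.conjStarAlgAut_apply, Matrix.star_eq_conjTranspose]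
  apply Matrix.PosSemidef.mul_mul_conjTranspose_same
  refine posSemidef_diagonal_iff.mpr fun i => ?_
  simp only [Function.comp_apply, RCLike.ofReal_nonneg]
  exact hf i

lemma trNorm_of_posSemidef' {P : Matrix n n ℂ} (hP : P.PosSemidef) :
    trNorm P = P.trace.re := by
  have h1 : Pᴴ * P = P ^ 2 := by rw [hP.1, pow_two]
  have hpow : (P ^ 2).PosSemidef := hP.pow 2
  have h2 : cfc Real.sqrt (P ^ 2) = P := by
    rw [← cfc_comp_pow (R := ℝ) Real.sqrt 2 P (ha := hP.1.isSelfAdjoint)]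
    calc cfc (fun x : ℝ => Real.sqrt (x ^ 2)) P = cfc (id : ℝ → ℝ) P := cfc_congr fun x hx => by
          rw [hP.1.spectrum_real_eq_range_eigenvalues] at hx
          obtain ⟨i, rfl⟩ := hx
          exact Real.sqrt_sq (hP.eigenvalues_nonneg i)
      _ = P := cfc_id ℝ P hP.1.isSelfAdjoint
  unfold trNorm matAbs msqrt
  rw [h1, h2]

lemma diag_conj' (W : Matrix n n ℂ) (d : n → ℝ) (i : n) :
    (star W * diagonal ((RCLike.ofReal ∘ d : n → ℂ)) * W) i i
      = ((∑ j, Complex.normSq (W j i) * d j : ℝ) : ℂ) := by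
  rw [Matrix.star_eq_conjTranspose, mul_apply]
  push_cast
  refine Finset.sum_congr rfl fun j _ => ?_
  rw [mul_diagonal, conjTranspose_apply]
  simp only [Function.comp_apply, Complex.star_def, Complex.normSq_eq_conj_mul_self]
  exact mul_right_comm _ _ _

lemma colsum' {W : Matrix n n ℂ} (hW : W ∈ Matrix.unitaryGroup n ℂ) (i : n) :
    ∑ j, Complex.normSq (W j i) = 1 := by
  have h := Matrix.mem_unitaryGroup_iff'.mp hW
  have h2 : (star W * W) i i = 1 := by rw [h]; simp
  rw [Matrix.star_eq_conjTranspose, mul_apply] at h2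
  have : ∑ j, ((Complex.normSq (W j i) : ℂ)) = 1 := by
    rw [← h2]
    refine Finset.sum_congr rfl fun j _ => ?_
    rw [conjTranspose_apply, Complex.star_def, Complex.normSq_eq_conj_mul_self]
  exact_mod_cast this

lemma rowsum' {W : Matrix n n ℂ} (hW : W ∈ Matrix.unitaryGroup n ℂ) (j : n) :
    ∑ i, Complex.normSq (W j i) = 1 := by
  have h := Matrix.mem_unitaryGroup_iff.mp hW
  have h2 : (W * star W) j j = 1 := by rw [h]; simp
  rw [Matrix.star_eq_conjTranspose, mul_apply] at h2
  have : ∑ i, ((Complex.normSq (W j i) : ℂ)) = 1 := by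
    rw [← h2]
    refine Finset.sum_congr rfl fun i _ => ?_
    rw [conjTranspose_apply, Complex.star_def, ← Complex.mul_conj]
  exact_mod_cast this

end AuxJensen

/-- Jensen-type inequality for the trace norm and a convex function. -/
theorem traceNorm_jensen_convex {n : Type*} [Fintype n] [DecidableEq n] {m : ℕ}
    (φ : ℝ → ℝ) (hconv : ConvexOn ℝ (Set.Ici 0) φ)
    (hcont : ContinuousOn φ (Set.Ici 0))
    (hφ0 : φ 0 = 0) (hφpos : ∀ t ∈ Set.Ici (0 : ℝ), 0 ≤ φ t)
    (A : Fin m → Matrix n n ℂ) (hA : ∀ k, (A k).PosSemidef)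
    (γ : Fin m → ℝ) (hγ : ∀ k, 0 ≤ γ k) (hγ1 : ∑ k, γ k = 1) :
    trNorm (mfun φ (∑ k, (γ k : ℂ) • A k)) ≤
      trNorm (∑ k, (γ k : ℂ) • mfun φ (A k)) := by
  classical
  have hAkH : ∀ k, (A k).IsHermitian := fun k => (hA k).1
  set S : Matrix n n ℂ := ∑ k, (γ k : ℂ) • A k with hSdef
  have hS : S.PosSemidef := psd_sum' A hA γ hγ
  have hSH : S.IsHermitian := hS.1
  set μ : n → ℝ := hSH.eigenvalues with hμdef
  have hμ0 : ∀ i, 0 ≤ μ i := fun i => hS.eigenvalues_nonneg i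
  set V : Matrix n n ℂ := (hSH.eigenvectorUnitary : Matrix n n ℂ) with hVdef
  set lam : Fin m → n → ℝ := fun k => (hAkH k).eigenvalues with hlamdef
  have hlam0 : ∀ k j, 0 ≤ lam k j := fun k j => (hA k).eigenvalues_nonneg j
  set W : Fin m → Matrix n n ℂ :=
    fun k => star (((hAkH k).eigenvectorUnitary : Matrix n n ℂ)) * V with hWdef
  have hWu : ∀ k, W k ∈ Matrix.unitaryGroup n ℂ := fun k =>
    mul_mem (Unitary.star_mem ((hAkH k).eigenvectorUnitary).2) (hSH.eigenvectorUnitary).2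
  set w : Fin m → n → n → ℝ := fun k j i => Complex.normSq (W k j i) with hwdef
  have hw0 : ∀ k j i, 0 ≤ w k j i := fun k j i => Complex.normSq_nonneg _
  set r : Fin m → n → ℝ := fun k i => ∑ j, w k j i * lam k j with hrdef
  have hr0 : ∀ k i, 0 ≤ r k i := fun k i =>
    Finset.sum_nonneg fun j _ => mul_nonneg (hw0 k j i) (hlam0 k j)
  -- key diagonal entries
  have key : ∀ k i, (star V * A k * V) i i = ((r k i : ℝ) : ℂ) := by
    intro k i
    have hmat : star V * A k * V
        = star (W k) * diagonal ((RCLike.ofReal ∘ lam k : n → ℂ)) * W k := by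
      rw [hWdef]
      simp only [Matrix.star_mul, star_star]
      conv_lhs => rw [(hAkH k).spectral_theorem]
      simp only [Unitary.conjStarAlgAut_apply, mul_assoc, hlamdef]
    rw [hmat, diag_conj']
  -- μ as convex combination of r
  have hμeq : ∀ i, μ i = ∑ k, γ k * r k i := by
    intro i
    have hdiag : star V * S * V = diagonal ((RCLike.ofReal ∘ μ : n → ℂ)) :=
      by have := hSH.conjStarAlgAut_star_eigenvectorUnitary; rwa [Unitary.conjStarAlgAut_star_apply] at this
    have expand : star V * S * V = ∑ k, (γ k : ℂ) • (star V * A k * V) := by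
      rw [hSdef, Finset.mul_sum, Finset.sum_mul]
      refine Finset.sum_congr rfl fun k _ => ?_
      rw [Matrix.mul_smul, Matrix.smul_mul]
    have h1 : ((μ i : ℝ) : ℂ) = ∑ k, ((γ k * r k i : ℝ) : ℂ) := by
      calc ((μ i : ℝ) : ℂ) = diagonal ((RCLike.ofReal ∘ μ : n → ℂ)) i i := by
            simp [diagonal_apply_eq]
        _ = (star V * S * V) i i := by rw [hdiag]
        _ = ∑ k, ((γ k : ℂ) • (star V * A k * V)) i i := by
            rw [expand]; simp [Matrix.sum_apply]
        _ = ∑ k, ((γ k * r k i : ℝ) : ℂ) := by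
            refine Finset.sum_congr rfl fun k _ => ?_
            rw [Matrix.smul_apply, key k i]
            push_cast
            rw [smul_eq_mul]
    exact_mod_cast h1
  -- the two Jensen steps
  have jensen2 : ∀ k i, φ (r k i) ≤ ∑ j, w k j i * φ (lam k j) := by
    intro k i
    have := hconv.map_sum_le (t := Finset.univ) (w := fun j => w k j i)
      (p := fun j => lam k j) (fun j _ => hw0 k j i) (colsum' (hWu k) i)
      (fun j _ => hlam0 k j)
    simpa only [smul_eq_mul, hrdef] using this
  have jensen1 : ∀ i, φ (μ i) ≤ ∑ k, γ k * φ (r k i) := by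
    intro i
    have := hconv.map_sum_le (t := Finset.univ) (w := γ)
      (p := fun k => r k i) (fun k _ => hγ k) hγ1 (fun k _ => hr0 k i)
    rw [hμeq i]
    simpa only [smul_eq_mul] using this
  -- main real inequality
  have main : ∑ i, φ (μ i) ≤ ∑ k, γ k * ∑ j, φ (lam k j) := by
    calc ∑ i, φ (μ i) ≤ ∑ i, ∑ k, γ k * φ (r k i) :=
          Finset.sum_le_sum fun i _ => jensen1 i
      _ ≤ ∑ i, ∑ k, γ k * ∑ j, w k j i * φ (lam k j) :=
          Finset.sum_le_sum fun i _ => Finset.sum_le_sum fun k _ =>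
            mul_le_mul_of_nonneg_left (jensen2 k i) (hγ k)
      _ = ∑ k, γ k * ∑ j, φ (lam k j) := by
          rw [Finset.sum_comm]
          refine Finset.sum_congr rfl fun k _ => ?_
          rw [← Finset.mul_sum]
          congr 1
          rw [Finset.sum_comm]
          calc ∑ j, ∑ i, w k j i * φ (lam k j)
              = ∑ j, (∑ i, w k j i) * φ (lam k j) := by
                refine Finset.sum_congr rfl fun j _ => ?_
                rw [Finset.sum_mul]
            _ = ∑ j, φ (lam k j) := by
                refine Finset.sum_congr rfl fun j _ => ?_
                rw [rowsum' (hWu k) j, one_mul]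
  -- identify both sides
  have hL : trNorm (mfun φ S) = ∑ i, φ (μ i) := by
    have hps : (mfun φ S).PosSemidef := by
      show (cfc φ S).PosSemidef
      rw [hSH.cfc_eq]
      exact posSemidef_cfc' hSH φ (fun i => hφpos _ (hμ0 i))
    rw [trNorm_of_posSemidef' hps]
    show (cfc φ S).trace.re = _
    rw [hSH.cfc_eq, trace_cfc'']
    rw [← Complex.ofReal_sum, Complex.ofReal_re]
  have hR : trNorm (∑ k, (γ k : ℂ) • mfun φ (A k)) = ∑ k, γ k * ∑ j, φ (lam k j) := by
    have hpk : ∀ k, (mfun φ (A k)).PosSemidef := by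
      intro k
      show (cfc φ (A k)).PosSemidef
      rw [(hAkH k).cfc_eq]
      exact posSemidef_cfc' (hAkH k) φ (fun j => hφpos _ (hlam0 k j))
    have hpt : (∑ k, (γ k : ℂ) • mfun φ (A k)).PosSemidef :=
      psd_sum' _ hpk γ hγ
    rw [trNorm_of_posSemidef' hpt, trace_sum]
    have : ∀ k, ((γ k : ℂ) • mfun φ (A k)).trace = ((γ k * ∑ j, φ (lam k j) : ℝ) : ℂ) := by
      intro k
      rw [trace_smul]
      show (γ k : ℂ) • (cfc φ (A k)).trace = _
      rw [(hAkH k).cfc_eq, trace_cfc'', ← Complex.ofReal_sum, smul_eq_mul]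
      push_cast
      ring
    rw [Finset.sum_congr rfl fun k _ => this k, ← Complex.ofReal_sum, Complex.ofReal_re]
  rw [hL, hR]
  exact main
end

section
/- Concave Jensen-type inequality for the trace norm: let φ : [0,∞) → [0,∞) be concave with φ(0) = 0, and let B₁,…,B_m be positive semidefinite n×n complex matrices. Then ‖ φ(Σₖ Bₖ) ‖₁ ≤ ‖ Σₖ φ(Bₖ) ‖₁, i.e., tr φ(Σₖ Bₖ) ≤ Σₖ tr φ(Bₖ). -/
open Matrix
open scoped ComplexOrder

set_option linter.unusedSectionVars false

section Scalar

variable {φ : ℝ → ℝ}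

lemma mono_of_concave_nonneg (hconc : ConcaveOn ℝ (Set.Ici 0) φ)
    (hpos : ∀ t ∈ Set.Ici (0:ℝ), 0 ≤ φ t) : MonotoneOn φ (Set.Ici 0) := by
  rintro u hu v hv huv
  rcases eq_or_lt_of_le huv with rfl | hlt
  · exact le_rfl
  by_contra hcon
  push_neg at hcon
  have hu0 : (0:ℝ) ≤ u := hu
  have hv0 : (0:ℝ) ≤ φ v := hpos v (le_trans hu0 huv)
  have hd0 : (0:ℝ) < φ u - φ v := by linarith
  obtain ⟨d, hd⟩ : ∃ d, d = φ u - φ v := ⟨_, rfl⟩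
  rw [← hd] at hd0
  obtain ⟨w, hw⟩ : ∃ w, w = v + (v - u) * (φ v + 1) / d := ⟨_, rfl⟩
  have hvw : v < w := by
    have h1 : 0 < (v - u) * (φ v + 1) / d :=
      div_pos (mul_pos (by linarith) (by linarith)) hd0
    linarith [hw, h1]
  have hwu : (0:ℝ) < w - u := by linarith
  have hw0 : w ∈ Set.Ici (0:ℝ) := by
    simp only [Set.mem_Ici]; linarith
  have ha : (0:ℝ) ≤ (w-v)/(w-u) := div_nonneg (by linarith) hwu.le
  have hb : (0:ℝ) ≤ (v-u)/(w-u) := div_nonneg (by linarith) hwu.le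
  have hsum : (w-v)/(w-u) + (v-u)/(w-u) = 1 := by field_simp; try ring
  have key := hconc.2 hu hw0 ha hb hsum
  simp only [smul_eq_mul] at key
  have hxy : ((w-v)/(w-u)) * u + ((v-u)/(w-u)) * w = v := by field_simp; try ring
  rw [hxy] at key
  have hφw : 0 ≤ φ w := hpos w hw0
  have key' : (w - v) * φ u + (v - u) * φ w ≤ (w - u) * φ v := by
    have := mul_le_mul_of_nonneg_left key hwu.le
    calc (w - v) * φ u + (v - u) * φ w
        = (w - u) * ((w-v)/(w-u) * φ u + (v-u)/(w-u) * φ w) := by field_simp; try ring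
      _ ≤ (w - u) * φ v := this
  have hwv : (w - v) * d = (v - u) * (φ v + 1) := by
    rw [hw]; field_simp; try ring
  nlinarith [mul_pos (sub_pos.mpr hlt) hd0]

end Scalar

section Scalar2

lemma slope_le_slope {φ : ℝ → ℝ} {M u v M' : ℝ} (hconc : ConcaveOn ℝ (Set.Icc 0 M) φ)
    (hu : 0 ≤ u) (huv : u < v) (hvM' : v ≤ M') (hM'M : M' < M) :
    (φ M - φ M') / (M - M') ≤ (φ v - φ u) / (v - u) := by
  have hMIcc : M ∈ Set.Icc (0:ℝ) M := ⟨by linarith, le_rfl⟩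
  have huIcc : u ∈ Set.Icc (0:ℝ) M := ⟨hu, by linarith⟩
  have hvIcc : v ∈ Set.Icc (0:ℝ) M := ⟨by linarith, by linarith⟩
  rcases eq_or_lt_of_le hvM' with rfl | hlt
  · exact hconc.slope_anti_adjacent huIcc hMIcc huv hM'M
  · calc (φ M - φ M') / (M - M') ≤ (φ M' - φ v) / (M' - v) :=
        hconc.slope_anti_adjacent hvIcc hMIcc hlt hM'M
      _ ≤ (φ v - φ u) / (v - u) := hconc.slope_anti_adjacent huIcc
          ⟨by linarith, by linarith⟩ huv hlt

lemma rec_lemma {ι κ : Type*} [Fintype ι] [Fintype κ] :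
    ∀ (N : ℕ) (T : Finset ℝ), T.card ≤ N → (0:ℝ) ∈ T → (∀ t ∈ T, (0:ℝ) ≤ t) →
    ∀ (φ : ℝ → ℝ) (M : ℝ), M ∈ T → (∀ t ∈ T, t ≤ M) →
    ConcaveOn ℝ (Set.Icc 0 M) φ → MonotoneOn φ (Set.Icc 0 M) → φ 0 = 0 →
    ∀ (y : ι → ℝ) (x : κ → ℝ), (∀ i, y i ∈ T) → (∀ j, x j ∈ T) →
    (∀ s ∈ T, ∑ i, min (y i) s ≤ ∑ j, min (x j) s) →
    ∑ i, φ (y i) ≤ ∑ j, φ (x j) := by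
  intro N
  induction N with
  | zero =>
    intro T hcard h0T
    exact absurd (Finset.card_eq_zero.mp (Nat.le_zero.mp hcard) ▸ h0T)
      (Finset.notMem_empty 0)
  | succ N ih =>
    intro T hcard h0T hTpos φ M hMT hM hconc hmono hφ0 y x hyT hxT hmin
    by_cases hM0 : M ≤ 0
    · have hall : ∀ t ∈ T, t = (0:ℝ) :=
        fun t ht => le_antisymm ((hM t ht).trans hM0) (hTpos t ht)
      have h1 : ∑ i, φ (y i) = 0 := by
        rw [Finset.sum_eq_zero]; intro i _; rw [hall _ (hyT i), hφ0]
      have h2 : ∑ j, φ (x j) = 0 := by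
        rw [Finset.sum_eq_zero]; intro j _; rw [hall _ (hxT j), hφ0]
      rw [h1, h2]
    · push_neg at hM0
      have hM0' : (0:ℝ) ≠ M := ne_of_lt hM0
      have h0T₂ : (0:ℝ) ∈ T.erase M := Finset.mem_erase.mpr ⟨hM0', h0T⟩
      have hT₂ne : (T.erase M).Nonempty := ⟨0, h0T₂⟩
      obtain ⟨M', hM'⟩ : ∃ M', M' = (T.erase M).max' hT₂ne := ⟨_, rfl⟩
      have hM'T₂ : M' ∈ T.erase M := hM' ▸ Finset.max'_mem _ _
      have hM'T : M' ∈ T := Finset.mem_of_mem_erase hM'T₂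
      have hltM' : ∀ t ∈ T.erase M, t ≤ M' := fun t ht => hM' ▸ Finset.le_max' _ _ ht
      have hM'M : M' < M := lt_of_le_of_ne (hM M' hM'T) (Finset.ne_of_mem_erase hM'T₂)
      have hM'0 : (0:ℝ) ≤ M' := hTpos M' hM'T
      have hcard₂ : (T.erase M).card ≤ N := by
        have := Finset.card_erase_of_mem hMT
        omega
      obtain ⟨k, hk⟩ : ∃ k, k = (φ M - φ M') / (M - M') := ⟨_, rfl⟩
      have hk0 : 0 ≤ k := by
        rw [hk]
        exact div_nonneg (sub_nonneg.mpr (hmono ⟨hM'0, hM'M.le⟩ ⟨hM0.le, le_rfl⟩ hM'M.le))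
          (by linarith)
      have hkMM' : k * (M - M') = φ M - φ M' := by
        rw [hk, div_mul_cancel₀ _ (by linarith : M - M' ≠ 0)]
      obtain ⟨ψ, hψ⟩ : ∃ ψ : ℝ → ℝ, ψ = fun t => φ t - k * t := ⟨_, rfl⟩
      have hψ_apply : ∀ t, ψ t = φ t - k * t := fun t => by rw [hψ]
      -- membership of clamped values
      have hclamp : ∀ t, t ∈ T → min t M' ∈ T.erase M ∧ (t = M ∨ t ≤ M') := by
        intro t ht
        by_cases h : t = M
        · subst h
          rw [min_eq_right hM'M.le]
          exact ⟨hM'T₂, Or.inl rfl⟩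
        · have h2 : t ∈ T.erase M := Finset.mem_erase.mpr ⟨h, ht⟩
          have h3 : t ≤ M' := hltM' t h2
          rw [min_eq_left h3]
          exact ⟨h2, Or.inr h3⟩
      -- concavity of ψ
      have hconc' : ConcaveOn ℝ (Set.Icc 0 M') ψ := by
        refine ⟨convex_Icc _ _, ?_⟩
        intro p hp q hq a b ha hb hab
        have hpM : p ∈ Set.Icc (0:ℝ) M := ⟨hp.1, hp.2.trans hM'M.le⟩
        have hqM : q ∈ Set.Icc (0:ℝ) M := ⟨hq.1, hq.2.trans hM'M.le⟩
        have := hconc.2 hpM hqM ha hb hab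
        simp only [smul_eq_mul, hψ_apply] at *
        nlinarith [this]
      -- monotonicity of ψ
      have hmono' : MonotoneOn ψ (Set.Icc 0 M') := by
        intro p hp q hq hpq
        rcases eq_or_lt_of_le hpq with rfl | hlt
        · exact le_rfl
        have hs := slope_le_slope hconc hp.1 hlt hq.2 hM'M
        rw [← hk] at hs
        have h1 : k * (q - p) ≤ φ q - φ p := by
          have h2 := (le_div_iff₀ (by linarith : (0:ℝ) < q - p)).mp hs
          linarith
        simp only [hψ_apply]
        nlinarith
      have hψ0 : ψ 0 = 0 := by simp [hψ_apply, hφ0]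
      -- min hypothesis for clamped
      have hmin' : ∀ s ∈ T.erase M,
          ∑ i, min (min (y i) M') s ≤ ∑ j, min (min (x j) M') s := by
        intro s hs
        have hsM' : s ≤ M' := hltM' s hs
        have e : ∀ t : ℝ, min (min t M') s = min t s := by
          intro t
          rw [min_assoc, min_eq_right hsM']
        simp only [e]
        exact hmin s (Finset.mem_of_mem_erase hs)
      have IH := ih (T.erase M) hcard₂ h0T₂
        (fun t ht => hTpos t (Finset.mem_of_mem_erase ht)) ψ M' hM'T₂ hltM'
        hconc' hmono' hψ0 (fun i => min (y i) M') (fun j => min (x j) M')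
        (fun i => (hclamp _ (hyT i)).1) (fun j => (hclamp _ (hxT j)).1) hmin'
      -- decomposition φ t = ψ (min t M') + k * t for t ∈ T
      have hdec : ∀ t ∈ T, φ t = ψ (min t M') + k * t := by
        intro t ht
        rcases (hclamp t ht).2 with rfl | h
        · rw [min_eq_right hM'M.le, hψ_apply]
          linarith [hkMM']
        · rw [min_eq_left h, hψ_apply]
          ring
      -- sum of y ≤ sum of x
      have hsums : ∑ i, y i ≤ ∑ j, x j := by
        have := hmin M hMT
        have e1 : ∀ i, min (y i) M = y i := fun i => min_eq_left (hM _ (hyT i))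
        have e2 : ∀ j, min (x j) M = x j := fun j => min_eq_left (hM _ (hxT j))
        simpa only [e1, e2] using this
      calc ∑ i, φ (y i) = ∑ i, (ψ (min (y i) M') + k * y i) :=
            Finset.sum_congr rfl fun i _ => hdec _ (hyT i)
        _ = (∑ i, ψ (min (y i) M')) + k * ∑ i, y i := by
            rw [Finset.sum_add_distrib, Finset.mul_sum]
        _ ≤ (∑ j, ψ (min (x j) M')) + k * ∑ j, x j :=
            add_le_add IH (mul_le_mul_of_nonneg_left hsums hk0)
        _ = ∑ j, (ψ (min (x j) M') + k * x j) := by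
            rw [Finset.sum_add_distrib, Finset.mul_sum]
        _ = ∑ j, φ (x j) :=
            (Finset.sum_congr rfl fun j _ => (hdec _ (hxT j)).symm)

end Scalar2


section MatrixAux

variable {n : Type*} [Fintype n] [DecidableEq n]

lemma unit_star_mul (U : Matrix.unitaryGroup n ℂ) : (star U.1) * U.1 = 1 := by
  exact mem_unitaryGroup_iff'.mp U.2

lemma unit_mul_star (U : Matrix.unitaryGroup n ℂ) : U.1 * (star U.1) = 1 := by
  exact mem_unitaryGroup_iff.mp U.2

variable {A : Matrix n n ℂ} (hA : A.IsHermitian)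

lemma hcfc_mul (f g : ℝ → ℝ) :
    hA.cfc f * hA.cfc g = hA.cfc (fun t => f t * g t) := by
  unfold Matrix.IsHermitian.cfc
  simp only [Unitary.conjStarAlgAut_apply]
  have key : ∀ X Y : Matrix n n ℂ,
      ((hA.eigenvectorUnitary : Matrix n n ℂ) * X * (star (hA.eigenvectorUnitary) : Matrix n n ℂ))
      * ((hA.eigenvectorUnitary : Matrix n n ℂ) * Y * (star (hA.eigenvectorUnitary) : Matrix n n ℂ))
      = (hA.eigenvectorUnitary : Matrix n n ℂ) * (X * Y) *
        (star (hA.eigenvectorUnitary) : Matrix n n ℂ) := by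
    intro X Y
    have h1 := unit_star_mul (hA.eigenvectorUnitary)
    calc ((hA.eigenvectorUnitary : Matrix n n ℂ) * X * (star (hA.eigenvectorUnitary) : Matrix n n ℂ))
        * ((hA.eigenvectorUnitary : Matrix n n ℂ) * Y * (star (hA.eigenvectorUnitary) : Matrix n n ℂ))
        = (hA.eigenvectorUnitary : Matrix n n ℂ) * X *
          (((star (hA.eigenvectorUnitary) : Matrix n n ℂ) * (hA.eigenvectorUnitary : Matrix n n ℂ)) *
          (Y * (star (hA.eigenvectorUnitary) : Matrix n n ℂ))) := by
          simp only [mul_assoc]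
      _ = (hA.eigenvectorUnitary : Matrix n n ℂ) * (X * Y) *
          (star (hA.eigenvectorUnitary) : Matrix n n ℂ) := by
          rw [h1, one_mul]; simp only [mul_assoc]
  rw [key, diagonal_mul_diagonal]
  have e : (fun i => (RCLike.ofReal ∘ f ∘ hA.eigenvalues) i * (RCLike.ofReal ∘ g ∘ hA.eigenvalues) i)
      = (RCLike.ofReal ∘ (fun t => f t * g t) ∘ hA.eigenvalues : n → ℂ) := by
    funext i; simp [Function.comp]
  rw [e]

lemma hcfc_id : hA.cfc (fun t => t) = A := by
  conv_rhs => rw [hA.spectral_theorem]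
  rfl

lemma hcfc_trace (f : ℝ → ℝ) :
    (hA.cfc f).trace = ∑ i, (f (hA.eigenvalues i) : ℂ) := by
  unfold Matrix.IsHermitian.cfc
  simp only [Unitary.conjStarAlgAut_apply]
  rw [trace_mul_cycle, unit_star_mul (hA.eigenvectorUnitary), one_mul, trace_diagonal]
  rfl

lemma hcfc_trace_re (f : ℝ → ℝ) :
    ((hA.cfc f).trace).re = ∑ i, f (hA.eigenvalues i) := by
  rw [hcfc_trace]
  rw [Complex.re_sum]
  simp

lemma hcfc_congr {f g : ℝ → ℝ} (h : ∀ i, f (hA.eigenvalues i) = g (hA.eigenvalues i)) :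
    hA.cfc f = hA.cfc g := by
  unfold Matrix.IsHermitian.cfc
  have e : RCLike.ofReal ∘ f ∘ hA.eigenvalues = (RCLike.ofReal ∘ g ∘ hA.eigenvalues : n → ℂ) := by
    funext i; simp [Function.comp, h i]
  rw [e]

lemma hcfc_psd {f : ℝ → ℝ} (h : ∀ i, 0 ≤ f (hA.eigenvalues i)) :
    (hA.cfc f).PosSemidef := by
  unfold Matrix.IsHermitian.cfc
  have hd : (Matrix.diagonal (RCLike.ofReal ∘ f ∘ hA.eigenvalues) : Matrix n n ℂ).PosSemidef := by
    rw [posSemidef_diagonal_iff]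
    intro i
    simp only [Function.comp_apply]
    rw [RCLike.nonneg_iff]
    constructor
    · simpa using h i
    · simp
  have h2 := hd.mul_mul_conjTranspose_same (hA.eigenvectorUnitary : Matrix n n ℂ)
  rwa [← Matrix.star_eq_conjTranspose] at h2

lemma hcfc_zero : hA.cfc (fun _ => (0:ℝ)) = 0 := by
  unfold Matrix.IsHermitian.cfc
  simp only [Unitary.conjStarAlgAut_apply]
  have e : RCLike.ofReal ∘ (fun _ : ℝ => (0:ℝ)) ∘ hA.eigenvalues = (fun _ => 0 : n → ℂ) := by
    funext i; simp [Function.comp]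
  rw [e, diagonal_zero, mul_zero, zero_mul]

lemma hcfc_one : hA.cfc (fun _ => (1:ℝ)) = 1 := by
  unfold Matrix.IsHermitian.cfc
  simp only [Unitary.conjStarAlgAut_apply]
  have e : RCLike.ofReal ∘ (fun _ : ℝ => (1:ℝ)) ∘ hA.eigenvalues = (fun _ => 1 : n → ℂ) := by
    funext i; simp [Function.comp]
  rw [e]
  have : (Matrix.diagonal (fun _ => 1 : n → ℂ)) = 1 := diagonal_one
  rw [this, mul_one, unit_mul_star (hA.eigenvectorUnitary)]

lemma hcfc_sub (f g : ℝ → ℝ) :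
    hA.cfc (fun t => f t - g t) = hA.cfc f - hA.cfc g := by
  unfold Matrix.IsHermitian.cfc
  simp only [Unitary.conjStarAlgAut_apply]
  have e : RCLike.ofReal ∘ (fun t => f t - g t) ∘ hA.eigenvalues
      = ((RCLike.ofReal ∘ f ∘ hA.eigenvalues) - (RCLike.ofReal ∘ g ∘ hA.eigenvalues) : n → ℂ) := by
    funext i; simp [Function.comp]
  rw [e, Pi.sub_def, ← diagonal_sub, Matrix.mul_sub, Matrix.sub_mul]

end MatrixAux

section TraceAux

variable {n : Type*} [Fintype n] [DecidableEq n]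

lemma psd_diag_re_nonneg {M : Matrix n n ℂ} (hM : M.PosSemidef) (i : n) :
    0 ≤ (M i i).re := by
  have h := hM.re_dotProduct_nonneg (Pi.single i 1)
  simpa [dotProduct, Matrix.mulVec_single, Pi.single_apply, Finset.sum_ite_eq] using h

lemma psd_trace_re_nonneg {M : Matrix n n ℂ} (hM : M.PosSemidef) :
    0 ≤ (M.trace).re := by
  rw [Matrix.trace, Complex.re_sum]
  exact Finset.sum_nonneg fun i _ => psd_diag_re_nonneg hM i

open scoped MatrixOrder in
lemma trace_mul_psd_re_nonneg {A B : Matrix n n ℂ} (hA : A.PosSemidef) (hB : B.PosSemidef) :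
    0 ≤ ((A * B).trace).re := by
  obtain ⟨X, hX⟩ := CStarAlgebra.nonneg_iff_eq_star_mul_self.mp hB.nonneg
  rw [Matrix.star_eq_conjTranspose] at hX
  subst hX
  have h1 : A * (Xᴴ * X) = (A * Xᴴ) * X := by rw [mul_assoc]
  rw [h1, Matrix.trace_mul_comm, ← mul_assoc]
  exact psd_trace_re_nonneg (hA.mul_mul_conjTranspose_same X)

lemma trace_diagonal_mul (d : n → ℂ) (M : Matrix n n ℂ) :
    (Matrix.diagonal d * M).trace = ∑ i, d i * M i i := by
  rw [Matrix.trace]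
  congr 1
  funext i
  simp [Matrix.diag, Matrix.mul_apply, Matrix.diagonal_apply, Finset.sum_ite_eq, ite_mul]

lemma eq_zero_of_mulVec_eq_zero {M : Matrix n n ℂ} (h : ∀ x, M *ᵥ x = 0) : M = 0 := by
  ext i j
  have := congrFun (h (Pi.single j 1)) i
  simpa [Matrix.mulVec_single] using this

lemma herm_idem_psd {M : Matrix n n ℂ} (h1 : M.IsHermitian) (h2 : M * M = M) :
    M.PosSemidef := by
  have := Matrix.posSemidef_conjTranspose_mul_self M
  rwa [h1.eq, h2] at this

end TraceAux

section RankAux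

variable {n : Type*} [Fintype n] [DecidableEq n]

lemma matrix_rank_add_le (A B : Matrix n n ℂ) : (A + B).rank ≤ A.rank + B.rank := by
  unfold Matrix.rank
  have h1 : (A + B).mulVecLin = A.mulVecLin + B.mulVecLin := Matrix.mulVecLin_add A B
  have h2 : LinearMap.range (A.mulVecLin + B.mulVecLin) ≤
      LinearMap.range A.mulVecLin ⊔ LinearMap.range B.mulVecLin := by
    rintro _ ⟨x, rfl⟩
    exact Submodule.add_mem_sup (LinearMap.mem_range_self _ x) (LinearMap.mem_range_self _ x)
  rw [h1]
  calc Module.finrank ℂ (LinearMap.range (A.mulVecLin + B.mulVecLin))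
      ≤ Module.finrank ℂ ((LinearMap.range A.mulVecLin) ⊔ (LinearMap.range B.mulVecLin) :
        Submodule ℂ (n → ℂ)) := Submodule.finrank_mono h2
    _ ≤ _ := Submodule.finrank_add_le_finrank_add_finrank _ _

lemma isUnit_unitary (U : Matrix.unitaryGroup n ℂ) : IsUnit U.1 :=
  ⟨⟨U.1, star U.1, unit_mul_star U, unit_star_mul U⟩, rfl⟩

lemma isUnit_unitary_star (U : Matrix.unitaryGroup n ℂ) : IsUnit (star U.1) :=
  ⟨⟨star U.1, U.1, unit_star_mul U, unit_mul_star U⟩, rfl⟩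

lemma hcfc_rank {A : Matrix n n ℂ} (hA : A.IsHermitian) (f : ℝ → ℝ) :
    (hA.cfc f).rank = (Finset.univ.filter (fun i => f (hA.eigenvalues i) ≠ 0)).card := by
  unfold Matrix.IsHermitian.cfc
  simp only [Unitary.conjStarAlgAut_apply]
  rw [Matrix.rank_mul_eq_left_of_isUnit_det (star (hA.eigenvectorUnitary : Matrix n n ℂ)) _
      ((Matrix.isUnit_iff_isUnit_det _).mp (isUnit_unitary_star _)),
    Matrix.rank_mul_eq_right_of_isUnit_det (hA.eigenvectorUnitary : Matrix n n ℂ) _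
      ((Matrix.isUnit_iff_isUnit_det _).mp (isUnit_unitary _)),
    Matrix.rank_diagonal, Fintype.card_subtype]
  congr 1
  apply Finset.filter_congr
  intro i _
  simp [Function.comp]

end RankAux

section ConjAux

variable {n : Type*} [Fintype n] [DecidableEq n]

lemma trace_conj (U : Matrix.unitaryGroup n ℂ) (Q : Matrix n n ℂ) :
    ((star U.1) * Q * U.1).trace = Q.trace := by
  rw [Matrix.trace_mul_cycle, unit_mul_star U, one_mul]

lemma trace_mul_re_eig {C : Matrix n n ℂ} (hC : C.IsHermitian) (Q : Matrix n n ℂ) :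
    ((C * Q).trace).re = ∑ i, hC.eigenvalues i *
      (((star (hC.eigenvectorUnitary : Matrix n n ℂ)) * Q * (hC.eigenvectorUnitary : Matrix n n ℂ)) i i).re := by
  conv_lhs => rw [hC.spectral_theorem]
  rw [Unitary.conjStarAlgAut_apply]
  have h1 : ((hC.eigenvectorUnitary : Matrix n n ℂ) * Matrix.diagonal (RCLike.ofReal ∘ hC.eigenvalues) *
      (star (hC.eigenvectorUnitary : Matrix n n ℂ))) * Q
      = ((hC.eigenvectorUnitary : Matrix n n ℂ) * Matrix.diagonal (RCLike.ofReal ∘ hC.eigenvalues)) *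
        ((star (hC.eigenvectorUnitary : Matrix n n ℂ)) * Q) := by
    simp only [mul_assoc]
  rw [h1, Matrix.trace_mul_comm, mul_assoc, ← mul_assoc, ← mul_assoc, Matrix.trace_mul_comm,
    trace_diagonal_mul, Complex.re_sum]
  congr 1
  funext i
  rw [Function.comp_apply, RCLike.ofReal_alg]
  simp [Complex.ofReal_re, mul_assoc]

lemma conj_diag_nonneg {Q : Matrix n n ℂ} (hQ : Q.PosSemidef) (U : Matrix.unitaryGroup n ℂ) (i : n) :
    0 ≤ (((star U.1) * Q * U.1) i i).re := by
  have h := hQ.conjTranspose_mul_mul_same U.1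
  rw [← Matrix.star_eq_conjTranspose] at h
  exact psd_diag_re_nonneg h i

lemma conj_diag_le_one {Q : Matrix n n ℂ} (hQ' : (1 - Q).PosSemidef) (U : Matrix.unitaryGroup n ℂ) (i : n) :
    (((star U.1) * Q * U.1) i i).re ≤ 1 := by
  have h := conj_diag_nonneg hQ' U i
  have e : (star U.1) * (1 - Q) * U.1 = 1 - (star U.1) * Q * U.1 := by
    rw [Matrix.mul_sub, mul_one, Matrix.sub_mul, unit_star_mul U]
  rw [e] at h
  have e2 : ((1 - (star U.1) * Q * U.1) i i) = 1 - ((star U.1) * Q * U.1) i i := by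
    simp [Matrix.sub_apply, Matrix.one_apply_eq]
  rw [e2] at h
  simp only [Complex.sub_re, Complex.one_re] at h
  linarith

end ConjAux

section KeyTwo

variable {n : Type*} [Fintype n] [DecidableEq n]

lemma factor_zero {P R Q : Matrix n n ℂ} (hP : P.PosSemidef) (hR : R.PosSemidef)
    (hz : (P + R) * (1 - Q) = 0) : P * (1 - Q) = 0 := by
  apply _root_.eq_zero_of_mulVec_eq_zero
  intro x
  have hSy : (P + R) *ᵥ ((1 - Q) *ᵥ x) = 0 := by
    rw [Matrix.mulVec_mulVec, hz, Matrix.zero_mulVec]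
  set y := (1 - Q) *ᵥ x with hy
  have hdot : star y ⬝ᵥ (P *ᵥ y) + star y ⬝ᵥ (R *ᵥ y) = 0 := by
    rw [← dotProduct_add, ← Matrix.add_mulVec, hSy, dotProduct_zero]
  have h1 : star y ⬝ᵥ (P *ᵥ y) = 0 := by
    have ha := hP.dotProduct_mulVec_nonneg y
    have hb := hR.dotProduct_mulVec_nonneg y
    have hab := eq_neg_of_add_eq_zero_left hdot
    exact le_antisymm (hab ▸ neg_nonpos.mpr hb) ha
  have h2 : P *ᵥ y = 0 := (hP.dotProduct_mulVec_zero_iff y).mp h1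
  rw [← Matrix.mulVec_mulVec, ← hy, h2]

lemma join_psd {P Q : Matrix n n ℂ} (hP : P.PosSemidef) (hPP : P * P = P)
    (hQ : Q.PosSemidef) (hQQ : Q * Q = Q) (hPQ : P * (1 - Q) = 0) :
    (Q - P).PosSemidef := by
  have hP1 : P * Q = P := by
    have := hPQ
    rw [Matrix.mul_sub, mul_one] at this
    linear_combination (norm := noncomm_ring) -this
  have hQ1 : Q * P = P := by
    have := congrArg Matrix.conjTranspose hP1
    rwa [Matrix.conjTranspose_mul, hQ.1.eq, hP.1.eq] at this
  apply herm_idem_psd (hQ.1.sub hP.1)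
  rw [Matrix.sub_mul, Matrix.mul_sub, Matrix.mul_sub, hQQ, hP1, hQ1, hPP]
  noncomm_ring

lemma pointwise_cut {μ s q : ℝ} (h0 : 0 ≤ q) (h1 : q ≤ 1) :
    (μ - s) * q ≤ max (μ - s) 0 := by
  rcases le_total (μ - s) 0 with h | h
  · calc (μ - s) * q ≤ 0 := mul_nonpos_of_nonpos_of_nonneg h h0
      _ ≤ max (μ - s) 0 := le_max_right _ _
  · calc (μ - s) * q ≤ (μ - s) * 1 := mul_le_mul_of_nonneg_left h1 h
      _ = μ - s := mul_one _
      _ ≤ max (μ - s) 0 := le_max_left _ _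

lemma trace_re_eq_sum_eigenvalues {A : Matrix n n ℂ} (hA : A.IsHermitian) :
    (A.trace).re = ∑ i, hA.eigenvalues i := by
  have h := hcfc_trace_re hA (fun t => t)
  rwa [hcfc_id] at h

lemma key_posPart {A B C : Matrix n n ℂ} (hA : A.PosSemidef) (hB : B.PosSemidef)
    (hC : C.PosSemidef) (hCeq : C = A + B) {s : ℝ} (hs : 0 ≤ s) :
    ∑ i, max (hA.1.eigenvalues i - s) 0 + ∑ i, max (hB.1.eigenvalues i - s) 0
      ≤ ∑ i, max (hC.1.eigenvalues i - s) 0 := by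
  classical
  set e : ℝ → ℝ := fun t => if s < t then 1 else 0 with he
  set e₀ : ℝ → ℝ := fun t => if 0 < t then 1 else 0 with he₀
  have he_nonneg : ∀ t : ℝ, 0 ≤ e t := by intro t; rw [he]; dsimp; split <;> norm_num
  have he₀_nonneg : ∀ t : ℝ, 0 ≤ e₀ t := by intro t; rw [he₀]; dsimp; split <;> norm_num
  have he_idem : ∀ t : ℝ, e t * e t = e t := by intro t; rw [he]; dsimp; split <;> norm_num
  have he₀_idem : ∀ t : ℝ, e₀ t * e₀ t = e₀ t := by intro t; rw [he₀]; dsimp; split <;> norm_num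
  set P₁ := hA.1.cfc e with hP₁def
  set P₂ := hB.1.cfc e with hP₂def
  have hP₁ : P₁.PosSemidef := hcfc_psd hA.1 (fun i => he_nonneg _)
  have hP₂ : P₂.PosSemidef := hcfc_psd hB.1 (fun i => he_nonneg _)
  have hP₁idem : P₁ * P₁ = P₁ := by
    rw [hP₁def, hcfc_mul]; exact hcfc_congr hA.1 (fun i => he_idem _)
  have hP₂idem : P₂ * P₂ = P₂ := by
    rw [hP₂def, hcfc_mul]; exact hcfc_congr hB.1 (fun i => he_idem _)
  set S := P₁ + P₂ with hSdef
  have hS : S.PosSemidef := hP₁.add hP₂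
  set Q := hS.1.cfc e₀ with hQdef
  have hQ : Q.PosSemidef := hcfc_psd hS.1 (fun i => he₀_nonneg _)
  have hQidem : Q * Q = Q := by
    rw [hQdef, hcfc_mul]; exact hcfc_congr hS.1 (fun i => he₀_idem _)
  have h1Q : (1 - Q).PosSemidef := by
    have h := hcfc_sub hS.1 (fun _ => (1:ℝ)) e₀
    rw [hcfc_one] at h
    rw [← h]
    apply hcfc_psd hS.1
    intro i
    rw [he₀]; dsimp; split <;> norm_num
  have hS1Q : S * (1 - Q) = 0 := by
    have h := hcfc_sub hS.1 (fun _ => (1:ℝ)) e₀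
    rw [hcfc_one] at h
    rw [← h]
    nth_rewrite 1 [← hcfc_id hS.1]
    rw [hcfc_mul]
    rw [← hcfc_zero hS.1]
    apply hcfc_congr hS.1
    intro i
    have hnn := hS.eigenvalues_nonneg i
    rcases lt_or_eq_of_le hnn with h' | h'
    · rw [he₀]; dsimp; rw [if_pos h']; ring
    · rw [← h']; ring
  have hQP₁ : (Q - P₁).PosSemidef :=
    join_psd hP₁ hP₁idem hQ hQidem (factor_zero hP₁ hP₂ (hSdef ▸ hS1Q))
  have hQP₂ : (Q - P₂).PosSemidef := by
    apply join_psd hP₂ hP₂idem hQ hQidem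
    apply factor_zero hP₂ hP₁
    rw [add_comm]
    exact hSdef ▸ hS1Q
  -- trace formulas
  have hTrP₁ : (P₁.trace).re = ∑ i, e (hA.1.eigenvalues i) := hcfc_trace_re hA.1 e
  have hTrP₂ : (P₂.trace).re = ∑ i, e (hB.1.eigenvalues i) := hcfc_trace_re hB.1 e
  have hAP₁ : ((A * P₁).trace).re = ∑ i, hA.1.eigenvalues i * e (hA.1.eigenvalues i) := by
    nth_rewrite 1 [← hcfc_id hA.1]
    rw [hP₁def, hcfc_mul]
    exact hcfc_trace_re hA.1 _
  have hBP₂ : ((B * P₂).trace).re = ∑ i, hB.1.eigenvalues i * e (hB.1.eigenvalues i) := by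
    nth_rewrite 1 [← hcfc_id hB.1]
    rw [hP₂def, hcfc_mul]
    exact hcfc_trace_re hB.1 _
  -- pos part sums
  have hsumA : ∑ i, max (hA.1.eigenvalues i - s) 0
      = ((A * P₁).trace).re - s * (P₁.trace).re := by
    rw [hAP₁, hTrP₁, Finset.mul_sum, ← Finset.sum_sub_distrib]
    apply Finset.sum_congr rfl
    intro i _
    rw [he]; dsimp
    rcases lt_or_ge s (hA.1.eigenvalues i) with h' | h'
    · rw [if_pos h', max_eq_left (by linarith)]; ring
    · rw [if_neg (not_lt.mpr h'), max_eq_right (by linarith)]; ring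
  have hsumB : ∑ i, max (hB.1.eigenvalues i - s) 0
      = ((B * P₂).trace).re - s * (P₂.trace).re := by
    rw [hBP₂, hTrP₂, Finset.mul_sum, ← Finset.sum_sub_distrib]
    apply Finset.sum_congr rfl
    intro i _
    rw [he]; dsimp
    rcases lt_or_ge s (hB.1.eigenvalues i) with h' | h'
    · rw [if_pos h', max_eq_left (by linarith)]; ring
    · rw [if_neg (not_lt.mpr h'), max_eq_right (by linarith)]; ring
  -- trace of Q vs ranks
  have hTrQ : (Q.trace).re = ∑ i, e₀ (hS.1.eigenvalues i) := hcfc_trace_re hS.1 e₀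
  have hcount : ∀ t : ℝ, 0 ≤ t → (e₀ t ≠ 0 ↔ t ≠ 0) := by
    intro t ht
    rw [he₀]; dsimp
    constructor
    · intro h h0; rw [h0] at h; simp at h
    · intro h; rw [if_pos (lt_of_le_of_ne ht (Ne.symm h))]; norm_num
  have hQrank : Q.rank = (Finset.univ.filter (fun i => e₀ (hS.1.eigenvalues i) ≠ 0)).card :=
    hcfc_rank hS.1 e₀
  have hSrank : S.rank = (Finset.univ.filter (fun i => hS.1.eigenvalues i ≠ 0)).card := by
    rw [hS.1.rank_eq_card_non_zero_eigs, Fintype.card_subtype]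
  have hQSrank : Q.rank = S.rank := by
    rw [hQrank, hSrank]
    congr 1
    apply Finset.filter_congr
    intro i _
    exact hcount _ (hS.eigenvalues_nonneg i)
  have hP₁rank : (P₁.rank : ℝ) = (P₁.trace).re := by
    rw [hcfc_rank hA.1 e, hTrP₁, ← Finset.sum_boole]
    apply Finset.sum_congr rfl
    intro i _
    by_cases h : s < hA.1.eigenvalues i <;> simp [he, h]
  have hP₂rank : (P₂.rank : ℝ) = (P₂.trace).re := by
    rw [hcfc_rank hB.1 e, hTrP₂, ← Finset.sum_boole]
    apply Finset.sum_congr rfl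
    intro i _
    by_cases h : s < hB.1.eigenvalues i <;> simp [he, h]
  have hQrank_tr : (Q.rank : ℝ) = (Q.trace).re := by
    rw [hQrank, hTrQ, ← Finset.sum_boole]
    apply Finset.sum_congr rfl
    intro i _
    by_cases h : 0 < hS.1.eigenvalues i <;> simp [he₀, h]
  have hTrQ_le : (Q.trace).re ≤ (P₁.trace).re + (P₂.trace).re := by
    rw [← hQrank_tr, ← hP₁rank, ← hP₂rank, hQSrank]
    have := matrix_rank_add_le P₁ P₂
    rw [← hSdef] at this
    exact_mod_cast this
  -- monotonicity steps
  have hAP₁Q : ((A * P₁).trace).re ≤ ((A * Q).trace).re := by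
    have h := trace_mul_psd_re_nonneg hA hQP₁
    rw [Matrix.mul_sub, Matrix.trace_sub, Complex.sub_re] at h
    linarith
  have hBP₂Q : ((B * P₂).trace).re ≤ ((B * Q).trace).re := by
    have h := trace_mul_psd_re_nonneg hB hQP₂
    rw [Matrix.mul_sub, Matrix.trace_sub, Complex.sub_re] at h
    linarith
  have hCQ : ((C * Q).trace).re = ((A * Q).trace).re + ((B * Q).trace).re := by
    rw [hCeq, Matrix.add_mul, Matrix.trace_add, Complex.add_re]
  -- final bound on Tr(CQ) - s TrQ
  set U := hC.1.eigenvectorUnitary with hU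
  set q : n → ℝ := fun i => (((star (U : Matrix n n ℂ)) * Q * (U : Matrix n n ℂ)) i i).re with hq
  have hq0 : ∀ i, 0 ≤ q i := fun i => conj_diag_nonneg hQ U i
  have hq1 : ∀ i, q i ≤ 1 := fun i => conj_diag_le_one h1Q U i
  have hCQeig : ((C * Q).trace).re = ∑ i, hC.1.eigenvalues i * q i := trace_mul_re_eig hC.1 Q
  have hTrQq : (Q.trace).re = ∑ i, q i := by
    rw [← trace_conj U Q, Matrix.trace, Complex.re_sum]
    rfl
  have hfinal : ((C * Q).trace).re - s * (Q.trace).re ≤ ∑ i, max (hC.1.eigenvalues i - s) 0 := by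
    rw [hCQeig, hTrQq, Finset.mul_sum, ← Finset.sum_sub_distrib]
    apply Finset.sum_le_sum
    intro i _
    have := pointwise_cut (μ := hC.1.eigenvalues i) (s := s) (hq0 i) (hq1 i)
    linarith [this]
  -- assemble
  rw [hsumA, hsumB]
  have hTrQ_nonneg := psd_trace_re_nonneg hQ
  nlinarith [hAP₁Q, hBP₂Q, hCQ, hfinal, hTrQ_le, hs]

end KeyTwo

section Assemble

variable {n : Type*} [Fintype n] [DecidableEq n]

lemma key_min {A B C : Matrix n n ℂ} (hA : A.PosSemidef) (hB : B.PosSemidef)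
    (hC : C.PosSemidef) (hCeq : C = A + B) {s : ℝ} (hs : 0 ≤ s) :
    ∑ i, min (hC.1.eigenvalues i) s
      ≤ ∑ i, min (hA.1.eigenvalues i) s + ∑ i, min (hB.1.eigenvalues i) s := by
  have h1 := trace_re_eq_sum_eigenvalues hC.1
  have h2 := trace_re_eq_sum_eigenvalues hA.1
  have h3 := trace_re_eq_sum_eigenvalues hB.1
  have h4 : C.trace.re = A.trace.re + B.trace.re := by
    rw [hCeq, Matrix.trace_add, Complex.add_re]
  have hpp := key_posPart hA hB hC hCeq hs
  have e : ∀ t : ℝ, min t s = t - max (t - s) 0 := by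
    intro t
    rcases le_total t s with h | h
    · rw [min_eq_left h, max_eq_right (by linarith)]; ring
    · rw [min_eq_right h, max_eq_left (by linarith)]; ring
  simp only [e]
  rw [Finset.sum_sub_distrib, Finset.sum_sub_distrib, Finset.sum_sub_distrib]
  linarith

lemma psd_sum {ι : Type*} (t : Finset ι) (B : ι → Matrix n n ℂ)
    (hB : ∀ k, (B k).PosSemidef) : (∑ k ∈ t, B k).PosSemidef := by
  induction t using Finset.cons_induction with
  | empty => rw [Finset.sum_empty]; exact Matrix.PosSemidef.zero
  | cons a t ha ih => rw [Finset.sum_cons]; exact (hB a).add ih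

lemma eig_zero (h0 : (0 : Matrix n n ℂ).PosSemidef) (i : n) : h0.1.eigenvalues i = 0 := by
  have hsum : ∑ j, h0.1.eigenvalues j = 0 := by
    rw [← trace_re_eq_sum_eigenvalues h0.1, Matrix.trace_zero, Complex.zero_re]
  have := (Finset.sum_eq_zero_iff_of_nonneg
    (fun j _ => h0.eigenvalues_nonneg j)).mp hsum
  exact this i (Finset.mem_univ i)

lemma key_min_sum {ι : Type*} (t : Finset ι) (B : ι → Matrix n n ℂ)
    (hB : ∀ k, (B k).PosSemidef) {s : ℝ} (hs : 0 ≤ s) :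
    ∀ (C : Matrix n n ℂ) (hC : C.PosSemidef), C = ∑ k ∈ t, B k →
    ∑ i, min (hC.1.eigenvalues i) s ≤ ∑ k ∈ t, ∑ i, min ((hB k).1.eigenvalues i) s := by
  induction t using Finset.cons_induction with
  | empty =>
    intro C hC hCeq
    rw [Finset.sum_empty] at hCeq
    subst hCeq
    rw [Finset.sum_empty]
    rw [Finset.sum_congr rfl (fun i _ => by rw [eig_zero hC i, min_eq_left hs])]
    simp
  | cons a t ha ih =>
    intro C hC hCeq
    rw [Finset.sum_cons] at hCeq
    have hrest : (∑ k ∈ t, B k).PosSemidef := psd_sum t B hB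
    have h2 := key_min (hB a) hrest hC hCeq hs
    have h3 := ih _ hrest rfl
    rw [Finset.sum_cons]
    linarith

lemma scalar_main {ι κ : Type*} [Fintype ι] [Fintype κ] {φ : ℝ → ℝ}
    (hconc : ConcaveOn ℝ (Set.Ici 0) φ) (hφ0 : φ 0 = 0)
    (hφpos : ∀ t ∈ Set.Ici (0:ℝ), 0 ≤ φ t)
    (y : ι → ℝ) (x : κ → ℝ) (hy : ∀ i, 0 ≤ y i) (hx : ∀ j, 0 ≤ x j)
    (hmin : ∀ s : ℝ, 0 ≤ s → ∑ i, min (y i) s ≤ ∑ j, min (x j) s) :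
    ∑ i, φ (y i) ≤ ∑ j, φ (x j) := by
  classical
  set T : Finset ℝ := insert (0:ℝ)
    ((Finset.image y Finset.univ) ∪ (Finset.image x Finset.univ)) with hT
  have h0T : (0:ℝ) ∈ T := Finset.mem_insert_self _ _
  have hyT : ∀ i, y i ∈ T := fun i => Finset.mem_insert_of_mem
    (Finset.mem_union_left _ (Finset.mem_image_of_mem y (Finset.mem_univ i)))
  have hxT : ∀ j, x j ∈ T := fun j => Finset.mem_insert_of_mem
    (Finset.mem_union_right _ (Finset.mem_image_of_mem x (Finset.mem_univ j)))
  have hTpos : ∀ t ∈ T, (0:ℝ) ≤ t := by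
    intro t ht
    rw [hT] at ht
    rcases Finset.mem_insert.mp ht with rfl | ht
    · exact le_rfl
    rcases Finset.mem_union.mp ht with ht | ht
    · obtain ⟨i, _, rfl⟩ := Finset.mem_image.mp ht; exact hy i
    · obtain ⟨j, _, rfl⟩ := Finset.mem_image.mp ht; exact hx j
  have hTne : T.Nonempty := ⟨0, h0T⟩
  have hMT : T.max' hTne ∈ T := Finset.max'_mem _ _
  have hM : ∀ t ∈ T, t ≤ T.max' hTne := fun t ht => Finset.le_max' _ _ ht
  have hM0 : (0:ℝ) ≤ T.max' hTne := hTpos _ hMT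
  have hconcM : ConcaveOn ℝ (Set.Icc 0 (T.max' hTne)) φ :=
    hconc.subset Set.Icc_subset_Ici_self (convex_Icc _ _)
  have hmonoM : MonotoneOn φ (Set.Icc 0 (T.max' hTne)) :=
    (mono_of_concave_nonneg hconc hφpos).mono Set.Icc_subset_Ici_self
  exact rec_lemma T.card T le_rfl h0T hTpos φ (T.max' hTne) hMT hM hconcM hmonoM hφ0
    y x hyT hxT (fun s hs => hmin s (hTpos s hs))

end Assemble

section MatAbs

variable {n : Type*} [Fintype n] [DecidableEq n]

lemma matAbs_psd {M : Matrix n n ℂ} (hM : M.PosSemidef) : matAbs M = M := by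
  unfold matAbs msqrt
  rw [hM.1.eq, ← pow_two]
  have hpow : (M ^ 2).PosSemidef := hM.pow 2
  have hsa : IsSelfAdjoint M := hM.1
  rw [← cfc_comp_pow (R := ℝ) Real.sqrt 2 M (ha := hsa)]
  conv_rhs => rw [← cfc_id' ℝ M (ha := hsa)]
  apply cfc_congr
  intro x hx
  rw [hM.1.spectrum_real_eq_range_eigenvalues] at hx
  obtain ⟨i, rfl⟩ := hx
  exact Real.sqrt_sq (hM.eigenvalues_nonneg i)

end MatAbs

/-- Jensen-type inequality for the trace norm and a concave function. -/
theorem traceNorm_jensen_concave {n : Type*} [Fintype n] [DecidableEq n] {m : ℕ}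
    (φ : ℝ → ℝ) (hconc : ConcaveOn ℝ (Set.Ici 0) φ)
    (hcont : ContinuousOn φ (Set.Ici 0))
    (hφ0 : φ 0 = 0) (hφpos : ∀ t ∈ Set.Ici (0 : ℝ), 0 ≤ φ t)
    (B : Fin m → Matrix n n ℂ) (hB : ∀ k, (B k).PosSemidef) :
    trNorm (mfun φ (∑ k, B k)) ≤ trNorm (∑ k, mfun φ (B k)) := by
  classical
  have hC : (∑ k, B k).PosSemidef := psd_sum Finset.univ B hB
  have hL : mfun φ (∑ k, B k) = hC.1.cfc φ := by unfold mfun; exact hC.1.cfc_eq φ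
  have hφC : ∀ i, 0 ≤ φ (hC.1.eigenvalues i) := fun i => hφpos _ (hC.eigenvalues_nonneg i)
  have hLpsd : (mfun φ (∑ k, B k)).PosSemidef := by
    rw [hL]; exact hcfc_psd hC.1 hφC
  have hLtr : trNorm (mfun φ (∑ k, B k)) = ∑ i, φ (hC.1.eigenvalues i) := by
    unfold trNorm
    rw [matAbs_psd hLpsd, hL, hcfc_trace_re]
  have hRk : ∀ k, mfun φ (B k) = (hB k).1.cfc φ := fun k => by
    unfold mfun; exact (hB k).1.cfc_eq φ
  have hRkpsd : ∀ k, (mfun φ (B k)).PosSemidef := fun k => by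
    rw [hRk k]
    exact hcfc_psd (hB k).1 (fun i => hφpos _ ((hB k).eigenvalues_nonneg i))
  have hRpsd : (∑ k, mfun φ (B k)).PosSemidef := psd_sum _ _ hRkpsd
  have hRtr : trNorm (∑ k, mfun φ (B k)) = ∑ k, ∑ i, φ ((hB k).1.eigenvalues i) := by
    unfold trNorm
    rw [matAbs_psd hRpsd, Matrix.trace_sum, Complex.re_sum]
    apply Finset.sum_congr rfl
    intro k _
    rw [hRk k, hcfc_trace_re]
  rw [hLtr, hRtr]
  have hmin : ∀ s : ℝ, 0 ≤ s → ∑ i, min (hC.1.eigenvalues i) s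
      ≤ ∑ p : Fin m × n, min ((hB p.1).1.eigenvalues p.2) s := by
    intro s hs
    have h := key_min_sum Finset.univ B hB hs _ hC rfl
    rw [Fintype.sum_prod_type]
    exact h
  have hfin := scalar_main hconc hφ0 hφpos (hC.1.eigenvalues)
    (fun p : Fin m × n => (hB p.1).1.eigenvalues p.2)
    (fun i => hC.eigenvalues_nonneg i) (fun p => (hB p.1).eigenvalues_nonneg p.2) hmin
  rw [Fintype.sum_prod_type] at hfin
  exact hfin
end

section
/- Cauchy–Schwarz for matrix-weighted sums: let A₁,…,A_m, B₁,…,B_m be n×n complex matrices and X₁,…,X_m matrices with ‖Xₖ‖ ≤ 1 (operator norm). Then for the trace norm, ‖ Σₖ Aₖ* Xₖ Bₖ ‖₁ ≤ ‖ Σₖ Aₖ* Aₖ ‖₁^{1/2} · ‖ Σₖ Bₖ* Bₖ ‖₁^{1/2}. -/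
set_option linter.unusedSectionVars false
set_option maxHeartbeats 1000000


open Matrix
open scoped ComplexOrder

section Aux

variable {n : Type*} [Fintype n] [DecidableEq n]

local notation "⟪" x ", " y "⟫" => @inner ℂ _ _ x y

/-- Embed a bare function into Euclidean space. -/
noncomputable def ev {n : Type*} (x : n → ℂ) : EuclideanSpace ℂ n :=
  (WithLp.equiv 2 (n → ℂ)).symm x

lemma inner_ev (x y : n → ℂ) : ⟪ev x, ev y⟫ = star x ⬝ᵥ y := by
  rw [EuclideanSpace.inner_eq_star_dotProduct]; simp [ev]; exact dotProduct_comm _ _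

lemma inner_ev_mulVec_left (M : Matrix n n ℂ) (x y : n → ℂ) :
    ⟪ev (M *ᵥ x), ev y⟫ = ⟪ev x, ev (Mᴴ *ᵥ y)⟫ := by
  rw [inner_ev, inner_ev, star_mulVec, ← dotProduct_mulVec]

lemma trace_cfc_eq {M : Matrix n n ℂ} (hM : M.IsHermitian) (f : ℝ → ℝ) :
    (cfc f M).trace = ∑ i, (f (hM.eigenvalues i) : ℂ) := by
  rw [hM.cfc_eq, Matrix.IsHermitian.cfc, Unitary.conjStarAlgAut_apply, Matrix.trace_mul_cycle]
  rw [Unitary.coe_star_mul_self, Matrix.one_mul, Matrix.trace_diagonal]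
  simp [Function.comp]

lemma bessel_aux {ι : Type*} [Fintype ι] {E : Type*} [NormedAddCommGroup E]
    [InnerProductSpace ℂ E] (u : ι → E)
    (ho : ∀ i j, i ≠ j → ⟪u i, u j⟫ = 0)
    (hn : ∀ i, u i ≠ 0 → ‖u i‖ = 1) (x : E) :
    ∑ i, ‖⟪u i, x⟫‖ ^ 2 ≤ ‖x‖ ^ 2 := by
  classical
  have key : Orthonormal ℂ (fun i : {i // u i ≠ 0} => u (i : ι)) := by
    rw [orthonormal_iff_ite]
    rintro ⟨i, hi⟩ ⟨j, hj⟩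
    by_cases h : i = j
    · subst h
      simp [inner_self_eq_norm_sq_to_K, hn i hi]
    · have : (⟨i, hi⟩ : {i // u i ≠ 0}) ≠ ⟨j, hj⟩ := by simpa using h
      simp [this, ho i j h]
  have b := key.sum_inner_products_le (s := (Finset.univ : Finset {i // u i ≠ 0})) x
  refine le_trans (le_of_eq ?_) b
  rw [← Finset.sum_filter_of_ne (p := fun i => u i ≠ 0)
      (fun i _ h => by by_contra h0; exact h (by simp [h0])),
    Finset.sum_subtype (p := fun i => u i ≠ 0) (Finset.univ.filter (fun i => u i ≠ 0))
      (fun i => by simp) (fun i => ‖⟪u i, x⟫‖ ^ 2)]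

lemma sum_norm_mulVec_sq_le {ι : Type*} [Fintype ι] (M : Matrix n n ℂ) (u : ι → (n → ℂ))
    (ho : ∀ i j, i ≠ j → ⟪ev (u i), ev (u j)⟫ = 0)
    (hn : ∀ i, ev (u i) ≠ 0 → ‖ev (u i)‖ = 1) :
    ∑ i, ‖ev (M *ᵥ u i)‖ ^ 2 ≤ ((Mᴴ * M).trace).re := by
  have expand : ∀ i, ‖ev (M *ᵥ u i)‖ ^ 2 =
      ∑ j, ‖⟪ev (u i), ev (fun l => star (M j l))⟫‖ ^ 2 := by
    intro i
    rw [EuclideanSpace.norm_eq, Real.sq_sqrt (by positivity)]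
    refine Finset.sum_congr rfl fun j _ => ?_
    rw [norm_inner_symm, inner_ev]
    congr 1
    show ‖(M *ᵥ u i) j‖ = ‖_‖
    congr 1
    simp [mulVec, dotProduct]
  calc ∑ i, ‖ev (M *ᵥ u i)‖ ^ 2
      = ∑ j, ∑ i, ‖⟪ev (u i), ev (fun l => star (M j l))⟫‖ ^ 2 := by
        rw [Finset.sum_comm]; exact Finset.sum_congr rfl fun i _ => expand i
    _ ≤ ∑ j, ‖ev (fun l => star (M j l))‖ ^ 2 := by
        refine Finset.sum_le_sum fun j _ => ?_
        exact bessel_aux (fun i => ev (u i)) ho hn _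
    _ = ∑ j, ∑ l, ‖M j l‖ ^ 2 := by
        refine Finset.sum_congr rfl fun j _ => ?_
        rw [EuclideanSpace.norm_eq, Real.sq_sqrt (by positivity)]
        refine Finset.sum_congr rfl fun l _ => ?_
        show ‖star (M j l)‖ ^ 2 = _
        rw [norm_star]
    _ = ((Mᴴ * M).trace).re := by
        have h1 : ((Mᴴ * M).trace) = ∑ i, ∑ j, (starRingEnd ℂ) (M j i) * M j i := by
          simp [Matrix.trace, Matrix.mul_apply, Matrix.conjTranspose_apply]
        rw [h1, Complex.re_sum, Finset.sum_comm]
        refine Finset.sum_congr rfl fun j _ => ?_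
        rw [Complex.re_sum]
        refine Finset.sum_congr rfl fun i _ => ?_
        rw [mul_comm, Complex.mul_conj]
        simp [Complex.normSq_eq_norm_sq, ← Complex.ofReal_pow]

lemma msqrt_psd {P : Matrix n n ℂ} (hP : P.PosSemidef) : msqrt (Pᴴ * P) = P := by
  have hsa : IsSelfAdjoint P := hP.isHermitian
  have hspec : ∀ x ∈ spectrum ℝ P, 0 ≤ x := by
    intro x hx
    obtain ⟨i, rfl⟩ := hP.isHermitian.spectrum_real_eq_range_eigenvalues ▸ hx
    exact hP.eigenvalues_nonneg i
  have h2 : Pᴴ * P = cfc (fun x : ℝ => x ^ 2) P := by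
    rw [cfc_pow_id (R := ℝ) P 2, sq, hP.isHermitian.eq]
  rw [msqrt, h2, ← cfc_comp' Real.sqrt (fun x : ℝ => x ^ 2) P]
  rw [cfc_congr (g := fun x : ℝ => x) (fun x hx => Real.sqrt_sq (hspec x hx)), cfc_id' ℝ P]

lemma sum_mulVec' {m : ℕ} (f : Fin m → Matrix n n ℂ) (x : n → ℂ) :
    (∑ k, f k) *ᵥ x = ∑ k, f k *ᵥ x := by
  funext j
  simp only [Matrix.mulVec, dotProduct, Matrix.sum_apply, Finset.sum_apply, Finset.sum_mul]
  rw [Finset.sum_comm]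

lemma dotProduct_sum' {m : ℕ} (x : n → ℂ) (w : Fin m → (n → ℂ)) :
    x ⬝ᵥ (∑ k, w k) = ∑ k, x ⬝ᵥ w k := by
  simp only [dotProduct, Finset.sum_apply, Finset.mul_sum]
  rw [Finset.sum_comm]

lemma posSemidef_sum {m : ℕ} (f : Fin m → Matrix n n ℂ) (h : ∀ k, (f k).PosSemidef) :
    (∑ k, f k).PosSemidef :=
  Finset.sum_induction f _ (fun _ _ ha hb => ha.add hb) Matrix.PosSemidef.zero
    (fun k _ => h k)

end Aux

/-- Cauchy–Schwarz inequality for matrix-weighted sums in the trace norm. -/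
theorem traceNorm_cauchy_schwarz {n : Type*} [Fintype n] [DecidableEq n] {m : ℕ}
    (A B X : Fin m → Matrix n n ℂ) (hX : ∀ k, opNorm (X k) ≤ 1) :
    trNorm (∑ k, (A k)ᴴ * X k * B k) ≤
      trNorm (∑ k, (A k)ᴴ * A k) ^ ((1 : ℝ) / 2) *
        trNorm (∑ k, (B k)ᴴ * B k) ^ ((1 : ℝ) / 2) := by
  classical
  set T := ∑ k, (A k)ᴴ * X k * B k with hTdef
  have hTT : (Tᴴ * T).PosSemidef := Matrix.posSemidef_conjTranspose_mul_self T
  have hT : (Tᴴ * T).IsHermitian := hTT.isHermitian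
  set d : n → ℝ := hT.eigenvalues with hd_def
  have hd : ∀ i, 0 ≤ d i := fun i => hTT.eigenvalues_nonneg i
  set v : n → (n → ℂ) := fun i => ⇑(hT.eigenvectorBasis i) with hv_def
  have hvON : Orthonormal ℂ (fun i => ev (v i)) := hT.eigenvectorBasis.orthonormal
  have hvv : ∀ i j, (inner ℂ (ev (v i)) (ev (v j)) : ℂ) = if i = j then 1 else 0 :=
    orthonormal_iff_ite.mp hvON
  have heig : ∀ i, (Tᴴ * T) *ᵥ v i = d i • v i := fun i => hT.mulVec_eigenvectorBasis i
  have hTvTv : ∀ i j, (inner ℂ (ev (T *ᵥ v i)) (ev (T *ᵥ v j)) : ℂ)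
      = if i = j then (d i : ℂ) else 0 := by
    intro i j
    rw [inner_ev_mulVec_left, mulVec_mulVec, heig j, inner_ev, dotProduct_smul,
      ← inner_ev, hvv i j]
    by_cases h : i = j <;> simp [h, Complex.real_smul]
  have hTv0 : ∀ i, d i = 0 → T *ᵥ v i = 0 := by
    intro i h0
    have h1 := hTvTv i i
    rw [if_pos rfl, h0] at h1
    have h2 : ev (T *ᵥ v i) = 0 := inner_self_eq_zero.mp (by rw [h1]; simp)
    exact congrArg WithLp.ofLp h2
  have hnormTv : ∀ i, ‖ev (T *ᵥ v i)‖ = Real.sqrt (d i) := by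
    intro i
    rw [norm_eq_sqrt_re_inner (𝕜 := ℂ), hTvTv i i]
    simp
  -- step 1 : trace norm as sum of singular values
  have htr : trNorm T = ∑ i, Real.sqrt (d i) := by
    show ((cfc Real.sqrt (Tᴴ * T)).trace).re = _
    rw [trace_cfc_eq hT Real.sqrt, Complex.re_sum]
    simp [hd_def]
  -- the left singular vector family
  set c : n → ℂ := fun i => ((Real.sqrt (d i))⁻¹ : ℝ) with hc
  set u : n → (n → ℂ) := fun i => c i • (T *ᵥ v i) with hu
  have hu_ev : ∀ i, ev (u i) = c i • ev (T *ᵥ v i) := fun i => rfl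
  have hu_ortho : ∀ i j, i ≠ j → (inner ℂ (ev (u i)) (ev (u j)) : ℂ) = 0 := by
    intro i j hij
    rw [hu_ev, hu_ev, inner_smul_left, inner_smul_right, hTvTv i j, if_neg hij]
    simp
  have hsqrt_ne : ∀ i, d i ≠ 0 → Real.sqrt (d i) ≠ 0 := fun i h =>
    Real.sqrt_ne_zero'.mpr (lt_of_le_of_ne (hd i) (Ne.symm h))
  have hu_norm : ∀ i, ev (u i) ≠ 0 → ‖ev (u i)‖ = 1 := by
    intro i hne
    have hdne : d i ≠ 0 := by
      intro h0
      exact hne (by rw [hu_ev, hc]; simp [hTv0 i h0, ev])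
    rw [hu_ev, norm_smul, hnormTv i, hc]
    simp only [Complex.norm_real, Real.norm_eq_abs, abs_of_nonneg
      (inv_nonneg.mpr (Real.sqrt_nonneg _))]
    exact inv_mul_cancel₀ (hsqrt_ne i hdne)
  have hmain_i : ∀ i, Real.sqrt (d i) = (inner ℂ (ev (u i)) (ev (T *ᵥ v i)) : ℂ).re := by
    intro i
    rw [hu_ev, inner_smul_left, hTvTv i i, if_pos rfl, hc]
    have harith : (Real.sqrt (d i))⁻¹ * d i = Real.sqrt (d i) := by
      by_cases h0 : d i = 0
      · simp [h0]
      · calc (Real.sqrt (d i))⁻¹ * d i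
            = (Real.sqrt (d i))⁻¹ * (Real.sqrt (d i) * Real.sqrt (d i)) := by
              rw [Real.mul_self_sqrt (hd i)]
          _ = Real.sqrt (d i) := inv_mul_cancel_left₀ (hsqrt_ne i h0) _
    simp only [Complex.conj_ofReal, ← Complex.ofReal_mul, Complex.ofReal_re]
    exact harith.symm
  -- the operator norm bound
  have hXk : ∀ k (w : n → ℂ), ‖ev (X k *ᵥ w)‖ ≤ ‖ev w‖ := by
    intro k w
    have h1 : ev (X k *ᵥ w) = toEuclideanCLM (𝕜 := ℂ) (X k) (ev w) :=
      (toEuclideanCLM_toLp (X k) w).symm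
    rw [h1]
    calc ‖toEuclideanCLM (𝕜 := ℂ) (X k) (ev w)‖
        ≤ ‖toEuclideanCLM (𝕜 := ℂ) (X k)‖ * ‖ev w‖ :=
          ContinuousLinearMap.le_opNorm _ _
      _ ≤ 1 * ‖ev w‖ := mul_le_mul_of_nonneg_right (hX k) (norm_nonneg _)
      _ = ‖ev w‖ := one_mul _
  -- per-index bound
  have hbound : ∀ i, (inner ℂ (ev (u i)) (ev (T *ᵥ v i)) : ℂ).re ≤
      ∑ k, ‖ev (A k *ᵥ u i)‖ * ‖ev (B k *ᵥ v i)‖ := by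
    intro i
    have hexp : (inner ℂ (ev (u i)) (ev (T *ᵥ v i)) : ℂ) =
        ∑ k, (inner ℂ (ev (A k *ᵥ u i)) (ev (X k *ᵥ (B k *ᵥ v i))) : ℂ) := by
      rw [inner_ev, hTdef, sum_mulVec', dotProduct_sum']
      refine Finset.sum_congr rfl fun k _ => ?_
      rw [← mulVec_mulVec, ← mulVec_mulVec, ← inner_ev,
        ← inner_ev_mulVec_left (A k) (u i)]
    rw [hexp, Complex.re_sum]
    refine Finset.sum_le_sum fun k _ => ?_
    calc (inner ℂ (ev (A k *ᵥ u i)) (ev (X k *ᵥ (B k *ᵥ v i))) : ℂ).re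
        ≤ ‖(inner ℂ (ev (A k *ᵥ u i)) (ev (X k *ᵥ (B k *ᵥ v i))) : ℂ)‖ :=
          Complex.re_le_norm _
      _ ≤ ‖ev (A k *ᵥ u i)‖ * ‖ev (X k *ᵥ (B k *ᵥ v i))‖ := norm_inner_le_norm _ _
      _ ≤ ‖ev (A k *ᵥ u i)‖ * ‖ev (B k *ᵥ v i)‖ :=
          mul_le_mul_of_nonneg_left (hXk k _) (norm_nonneg _)
  -- sum it all up
  have hsum1 : trNorm T ≤ ∑ i, ∑ k, ‖ev (A k *ᵥ u i)‖ * ‖ev (B k *ᵥ v i)‖ := by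
    rw [htr]
    refine Finset.sum_le_sum fun i _ => ?_
    rw [hmain_i i]
    exact hbound i
  set SA : ℝ := ∑ i, ∑ k, ‖ev (A k *ᵥ u i)‖ ^ 2 with hSA
  set SB : ℝ := ∑ i, ∑ k, ‖ev (B k *ᵥ v i)‖ ^ 2 with hSB
  have hCS : (∑ i, ∑ k, ‖ev (A k *ᵥ u i)‖ * ‖ev (B k *ᵥ v i)‖) ≤
      Real.sqrt SA * Real.sqrt SB := by
    have h2 := Finset.sum_mul_sq_le_sq_mul_sq Finset.univ
      (fun p : n × Fin m => ‖ev (A p.2 *ᵥ u p.1)‖) (fun p => ‖ev (B p.2 *ᵥ v p.1)‖)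
    have hnn : (0:ℝ) ≤ ∑ p : n × Fin m, ‖ev (A p.2 *ᵥ u p.1)‖ * ‖ev (B p.2 *ᵥ v p.1)‖ :=
      Finset.sum_nonneg fun p _ => mul_nonneg (norm_nonneg _) (norm_nonneg _)
    have h3 := Real.sqrt_le_sqrt h2
    rw [Real.sqrt_sq hnn, Real.sqrt_mul (Finset.sum_nonneg fun p _ => sq_nonneg _)] at h3
    calc (∑ i, ∑ k, ‖ev (A k *ᵥ u i)‖ * ‖ev (B k *ᵥ v i)‖)
        = ∑ p : n × Fin m, ‖ev (A p.2 *ᵥ u p.1)‖ * ‖ev (B p.2 *ᵥ v p.1)‖ := by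
          rw [Fintype.sum_prod_type]
      _ ≤ _ := h3
      _ = Real.sqrt SA * Real.sqrt SB := by
          rw [hSA, hSB]
          congr 2 <;> rw [Fintype.sum_prod_type]
  have hAtr : SA ≤ ((∑ k, (A k)ᴴ * A k).trace).re := by
    rw [hSA, Finset.sum_comm]
    calc (∑ k, ∑ i, ‖ev (A k *ᵥ u i)‖ ^ 2)
        ≤ ∑ k : Fin m, (((A k)ᴴ * A k).trace).re :=
          Finset.sum_le_sum fun k _ => sum_norm_mulVec_sq_le (A k) u hu_ortho hu_norm
      _ = _ := by rw [Matrix.trace_sum, Complex.re_sum]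
  have hBtr : SB ≤ ((∑ k, (B k)ᴴ * B k).trace).re := by
    rw [hSB, Finset.sum_comm]
    calc (∑ k, ∑ i, ‖ev (B k *ᵥ v i)‖ ^ 2)
        ≤ ∑ k : Fin m, (((B k)ᴴ * B k).trace).re :=
          Finset.sum_le_sum fun k _ => sum_norm_mulVec_sq_le (B k) v
            (fun i j hij => by rw [hvv i j, if_neg hij])
            (fun i _ => hvON.1 i)
      _ = _ := by rw [Matrix.trace_sum, Complex.re_sum]
  -- trace norm of the PSD matrices
  have hPpsd : (∑ k, (A k)ᴴ * A k).PosSemidef :=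
    posSemidef_sum _ fun k => Matrix.posSemidef_conjTranspose_mul_self (A k)
  have hQpsd : (∑ k, (B k)ᴴ * B k).PosSemidef :=
    posSemidef_sum _ fun k => Matrix.posSemidef_conjTranspose_mul_self (B k)
  have hPtr : trNorm (∑ k, (A k)ᴴ * A k) = ((∑ k, (A k)ᴴ * A k).trace).re := by
    rw [trNorm, matAbs, msqrt_psd hPpsd]
  have hQtr : trNorm (∑ k, (B k)ᴴ * B k) = ((∑ k, (B k)ᴴ * B k).trace).re := by
    rw [trNorm, matAbs, msqrt_psd hQpsd]
  -- finish
  calc trNorm T ≤ Real.sqrt SA * Real.sqrt SB := hsum1.trans hCS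
    _ ≤ Real.sqrt (((∑ k, (A k)ᴴ * A k).trace).re) *
        Real.sqrt (((∑ k, (B k)ᴴ * B k).trace).re) :=
          mul_le_mul (Real.sqrt_le_sqrt hAtr) (Real.sqrt_le_sqrt hBtr)
            (Real.sqrt_nonneg _) (Real.sqrt_nonneg _)
    _ = trNorm (∑ k, (A k)ᴴ * A k) ^ ((1 : ℝ) / 2) *
        trNorm (∑ k, (B k)ᴴ * B k) ^ ((1 : ℝ) / 2) := by
          rw [hPtr, hQtr, Real.sqrt_eq_rpow, Real.sqrt_eq_rpow]
end
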